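/- arXiv:2209.14621 — 9 statements merged into one kernel-verified Lean document; each statement's English description precedes it below -/
import Mathlib

section
/- For all complex numbers z₁, z₂ (with the convention 0·ln 0 = 0), |Im((z₂ ln|z₂|² − z₁ ln|z₁|²)(conj(z₂) − conj(z₁)))| ≤ 2|z₂ − z₁|². -/
open Complex

theorem log_inequality (z₁ z₂ : ℂ) :
    |(((z₂ * (Real.log (‖z₂‖ ^ 2) : ℂ)) -
        (z₁ * (Real.log (‖z₁‖ ^ 2) : ℂ))) *
        ((starRingEnd ℂ) z₂ - (starRingEnd ℂ) z₁)).im| ≤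
      2 * ‖z₂ - z₁‖ ^ 2 := by
  set r₁ := ‖z₁‖ with hr₁
  set r₂ := ‖z₂‖ with hr₂
  set L₁ := Real.log (r₁ ^ 2) with hL₁
  set L₂ := Real.log (r₂ ^ 2) with hL₂
  have him : (((z₂ * (L₂ : ℂ)) - (z₁ * (L₁ : ℂ))) *
      ((starRingEnd ℂ) z₂ - (starRingEnd ℂ) z₁)).im
      = (L₁ - L₂) * (z₂ * (starRingEnd ℂ) z₁).im := by
    simp [Complex.mul_im, Complex.sub_im, Complex.sub_re, Complex.mul_re,
      Complex.conj_re, Complex.conj_im]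
    ring
  rw [him, abs_mul]
  rcases eq_or_ne z₁ 0 with h1 | h1
  · simp [h1]
  rcases eq_or_ne z₂ 0 with h2 | h2
  · simp [h2]
  have hr1 : 0 < r₁ := by simpa [hr₁] using h1
  have hr2 : 0 < r₂ := by simpa [hr₂] using h2
  set D := ‖z₂ - z₁‖ with hD
  have hD0 : 0 ≤ D := norm_nonneg _
  have hb1 : |(z₂ * (starRingEnd ℂ) z₁).im| ≤ D * r₁ := by
    have heq : z₂ * (starRingEnd ℂ) z₁
        = (z₂ - z₁) * (starRingEnd ℂ) z₁ + z₁ * (starRingEnd ℂ) z₁ := by ring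
    have : (z₂ * (starRingEnd ℂ) z₁).im = ((z₂ - z₁) * (starRingEnd ℂ) z₁).im := by
      rw [heq, Complex.add_im, Complex.mul_conj]
      simp
    rw [this]
    calc |((z₂ - z₁) * (starRingEnd ℂ) z₁).im| ≤ ‖(z₂ - z₁) * (starRingEnd ℂ) z₁‖ :=
          Complex.abs_im_le_norm _
      _ = D * r₁ := by rw [norm_mul, Complex.norm_conj]
  have hb2 : |(z₂ * (starRingEnd ℂ) z₁).im| ≤ D * r₂ := by
    have heq : z₂ * (starRingEnd ℂ) z₁
        = z₂ * ((starRingEnd ℂ) z₁ - (starRingEnd ℂ) z₂) + z₂ * (starRingEnd ℂ) z₂ := by ring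
    have : (z₂ * (starRingEnd ℂ) z₁).im = (z₂ * ((starRingEnd ℂ) z₁ - (starRingEnd ℂ) z₂)).im := by
      rw [heq, Complex.add_im, Complex.mul_conj]
      simp
    rw [this]
    calc |(z₂ * ((starRingEnd ℂ) z₁ - (starRingEnd ℂ) z₂)).im|
        ≤ ‖z₂ * ((starRingEnd ℂ) z₁ - (starRingEnd ℂ) z₂)‖ := Complex.abs_im_le_norm _
      _ = D * r₂ := by
          rw [norm_mul]
          have : (starRingEnd ℂ) z₁ - (starRingEnd ℂ) z₂ = (starRingEnd ℂ) (z₁ - z₂) := by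
            simp
          rw [this, Complex.norm_conj, show z₁ - z₂ = -(z₂ - z₁) from by ring,
            norm_neg]
          ring
  have habs : |r₂ - r₁| ≤ D := by
    rw [hD]
    exact abs_norm_sub_norm_le z₂ z₁
  have hm0 : 0 ≤ |(z₂ * (starRingEnd ℂ) z₁).im| := abs_nonneg _
  rcases le_total r₁ r₂ with hle | hle
  · -- L₂ ≥ L₁, use hb1
    have hlog : L₂ - L₁ ≤ 2 * ((r₂ - r₁) / r₁) := by
      have : L₂ - L₁ = 2 * Real.log (r₂ / r₁) := by
        rw [hL₁, hL₂, Real.log_div (ne_of_gt hr2) (ne_of_gt hr1)]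
        rw [Real.log_pow, Real.log_pow]
        push_cast
        ring
      rw [this]
      have h := Real.log_le_sub_one_of_pos (div_pos hr2 hr1)
      have : r₂ / r₁ - 1 = (r₂ - r₁) / r₁ := by field_simp
      linarith [this ▸ h]
    have hL1le : L₁ ≤ L₂ := by
      rw [hL₁, hL₂]
      exact Real.log_le_log (by positivity) (by nlinarith)
    have habsL : |L₁ - L₂| = L₂ - L₁ := by
      rw [abs_sub_comm]; exact abs_of_nonneg (by linarith)
    rw [habsL]
    calc (L₂ - L₁) * |(z₂ * (starRingEnd ℂ) z₁).im|
        ≤ (2 * ((r₂ - r₁) / r₁)) * (D * r₁) := by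
          apply mul_le_mul hlog hb1 hm0
          have : 0 ≤ (r₂ - r₁) / r₁ := div_nonneg (by linarith) hr1.le
          linarith
      _ = 2 * (r₂ - r₁) * D := by field_simp
      _ ≤ 2 * D ^ 2 := by nlinarith [abs_le.mp habs]
  · -- L₁ ≥ L₂, use hb2
    have hlog : L₁ - L₂ ≤ 2 * ((r₁ - r₂) / r₂) := by
      have : L₁ - L₂ = 2 * Real.log (r₁ / r₂) := by
        rw [hL₁, hL₂, Real.log_div (ne_of_gt hr1) (ne_of_gt hr2)]
        rw [Real.log_pow, Real.log_pow]
        push_cast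
        ring
      rw [this]
      have h := Real.log_le_sub_one_of_pos (div_pos hr1 hr2)
      have : r₁ / r₂ - 1 = (r₁ - r₂) / r₂ := by field_simp
      linarith [this ▸ h]
    have hL2le : L₂ ≤ L₁ := by
      rw [hL₁, hL₂]
      exact Real.log_le_log (by positivity) (by nlinarith)
    have habsL : |L₁ - L₂| = L₁ - L₂ := abs_of_nonneg (by linarith)
    rw [habsL]
    calc (L₁ - L₂) * |(z₂ * (starRingEnd ℂ) z₁).im|
        ≤ (2 * ((r₁ - r₂) / r₂)) * (D * r₂) := by
          apply mul_le_mul hlog hb2 hm0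
          have : 0 ≤ (r₁ - r₂) / r₂ := div_nonneg (by linarith) hr2.le
          linarith
      _ = 2 * (r₁ - r₂) * D := by field_simp
      _ ≤ 2 * D ^ 2 := by nlinarith [abs_le.mp habs]
end

section
/- For every ε ∈ (0,1) there exists a constant C > 0 such that for all complex numbers x, y (with the convention 0·ln 0 = 0), |x ln|x|² − y ln|y|²| ≤ C(|x|^ε |ln|x|| + |y|^ε |ln|y||) |x − y|^{1−ε} + 2|x − y|. -/
private lemma key_est (ε : ℝ) (hε0 : 0 < ε) (hε1 : ε < 1) (x y : ℂ)
    (hxy : ‖y‖ ≤ ‖x‖) :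
    ‖x * (Real.log (‖x‖ ^ 2) : ℂ) -
        y * (Real.log (‖y‖ ^ 2) : ℂ)‖ ≤
      4 * (‖x‖ ^ ε * |Real.log (‖x‖)| +
           ‖y‖ ^ ε * |Real.log (‖y‖)|) *
          ‖x - y‖ ^ (1 - ε) +
        2 * ‖x - y‖ := by
  by_cases hxyeq : x = y
  · subst hxyeq
    simp
    positivity
  set a := ‖x‖ with ha
  set b := ‖y‖ with hb
  set d := ‖x - y‖ with hd
  have hd0 : 0 < d := by
    rw [hd]
    simpa [sub_eq_zero] using hxyeq
  have ha0 : 0 < a := by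
    rcases lt_or_eq_of_le (norm_nonneg x) with h | h
    · exact h
    · exfalso
      have hx0 : x = 0 := norm_eq_zero.mp h.symm
      have hby : b ≤ 0 := le_of_le_of_eq hxy h.symm
      have hy0 : y = 0 :=
        norm_eq_zero.mp (le_antisymm hby (norm_nonneg y))
      exact hxyeq (hx0.trans hy0.symm)
  set L := Real.log a with hL
  set M := Real.log b with hM
  -- decomposition
  have hdecomp : x * (Real.log (a ^ 2) : ℂ) - y * (Real.log (b ^ 2) : ℂ) =
      (x - y) * (Real.log (a ^ 2) : ℂ) +
        y * ((Real.log (a ^ 2) : ℝ) - Real.log (b ^ 2) : ℝ) := by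
    push_cast
    ring
  have hloga : Real.log (a ^ 2) = 2 * L := by
    rw [hL, Real.log_pow]; push_cast; ring
  have hlogb : Real.log (b ^ 2) = 2 * M := by
    rw [hM, Real.log_pow]; push_cast; ring
  have htri : ‖x * (Real.log (a ^ 2) : ℂ) - y * (Real.log (b ^ 2) : ℂ)‖ ≤
      d * |Real.log (a ^ 2)| + b * |Real.log (a ^ 2) - Real.log (b ^ 2)| := by
    rw [hdecomp]
    refine le_trans (norm_add_le _ _) ?_
    rw [norm_mul, norm_mul, Complex.norm_real, Complex.norm_real, Real.norm_eq_abs, Real.norm_eq_abs]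
  -- bound the second piece
  have hpiece2 : b * |Real.log (a ^ 2) - Real.log (b ^ 2)| ≤ 2 * d := by
    by_cases hb0 : b = 0
    · rw [hb0]; simp; positivity
    · have hb0' : 0 < b := lt_of_le_of_ne (norm_nonneg y) (Ne.symm hb0)
      have hML : M ≤ L := Real.log_le_log hb0' hxy
      rw [hloga, hlogb]
      have : |2 * L - 2 * M| = 2 * (L - M) := by
        rw [abs_of_nonneg] <;> linarith
      rw [this]
      have hlog : L - M ≤ a / b - 1 := by
        have : L - M = Real.log (a / b) := by
          rw [hL, hM, Real.log_div (ne_of_gt ha0) hb0]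
        rw [this]
        exact Real.log_le_sub_one_of_pos (by positivity)
      have h1 : b * (L - M) ≤ a - b := by
        have := mul_le_mul_of_nonneg_left hlog (le_of_lt hb0')
        calc b * (L - M) ≤ b * (a / b - 1) := this
          _ = a - b := by field_simp
      have h2 : a - b ≤ d := by
        rw [ha, hb, hd]
        have := abs_norm_sub_norm_le x y
        calc ‖x‖ - ‖y‖ ≤ |‖x‖ - ‖y‖| := le_abs_self _
          _ ≤ ‖x - y‖ := this
      linarith
  -- bound the first piece
  have hdle : d ≤ 2 * a := by
    calc d ≤ a + b := norm_sub_le x y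
      _ ≤ 2 * a := by linarith
  have hpiece1 : d * |Real.log (a ^ 2)| ≤ 4 * (a ^ ε * |L|) * d ^ (1 - ε) := by
    rw [hloga, abs_mul, abs_two]
    have hdsplit : d = d ^ ε * d ^ (1 - ε) := by
      rw [← Real.rpow_add hd0]; simp
    have hde : d ^ ε ≤ 2 * a ^ ε := by
      calc d ^ ε ≤ (2 * a) ^ ε :=
            Real.rpow_le_rpow (le_of_lt hd0) hdle (le_of_lt hε0)
        _ = 2 ^ ε * a ^ ε := Real.mul_rpow (by norm_num) (le_of_lt ha0)
        _ ≤ 2 * a ^ ε := by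
            have : (2:ℝ) ^ ε ≤ 2 ^ (1:ℝ) :=
              Real.rpow_le_rpow_of_exponent_le (by norm_num) (le_of_lt hε1)
            have h2 : (2:ℝ) ^ (1:ℝ) = 2 := Real.rpow_one 2
            nlinarith [Real.rpow_nonneg (le_of_lt ha0) ε]
    calc d * (2 * |L|) = 2 * |L| * (d ^ ε * d ^ (1 - ε)) := by rw [← hdsplit]; ring
      _ ≤ 2 * |L| * ((2 * a ^ ε) * d ^ (1 - ε)) := by
          apply mul_le_mul_of_nonneg_left
          · apply mul_le_mul_of_nonneg_right hde (Real.rpow_nonneg (le_of_lt hd0) _)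
          · positivity
      _ = 4 * (a ^ ε * |L|) * d ^ (1 - ε) := by ring
  -- combine
  refine htri.trans ?_
  have hextra : 4 * (a ^ ε * |L|) * d ^ (1 - ε) ≤
      4 * (a ^ ε * |L| + b ^ ε * |M|) * d ^ (1 - ε) := by
    apply mul_le_mul_of_nonneg_right _ (Real.rpow_nonneg (le_of_lt hd0) _)
    nlinarith [Real.rpow_nonneg (norm_nonneg y) ε, abs_nonneg M]
  linarith

theorem lip_log_estimate (ε : ℝ) (hε : ε ∈ Set.Ioo (0:ℝ) 1) :
    ∃ C > 0, ∀ x y : ℂ,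
      ‖x * (Real.log (‖x‖ ^ 2) : ℂ) -
          y * (Real.log (‖y‖ ^ 2) : ℂ)‖ ≤
        C * (‖x‖ ^ ε * |Real.log (‖x‖)| +
             ‖y‖ ^ ε * |Real.log (‖y‖)|) *
            ‖x - y‖ ^ (1 - ε) +
          2 * ‖x - y‖ := by
  obtain ⟨hε0, hε1⟩ := hε
  refine ⟨4, by norm_num, fun x y => ?_⟩
  rcases le_total (‖y‖) (‖x‖) with h | h
  · exact key_est ε hε0 hε1 x y h
  · have := key_est ε hε0 hε1 y x h
    have hsub : ‖y - x‖ = ‖x - y‖ := by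
      rw [← norm_neg (y - x)]; ring_nf
    have habs : ‖y * (Real.log (‖y‖ ^ 2) : ℂ) -
        x * (Real.log (‖x‖ ^ 2) : ℂ)‖ =
        ‖x * (Real.log (‖x‖ ^ 2) : ℂ) -
        y * (Real.log (‖y‖ ^ 2) : ℂ)‖ := by
      rw [← norm_neg]; ring_nf
    rw [habs, hsub] at this
    linarith [this]
end

section
/- For all real y ≥ 0, the identity y² ln(y²) − y² + 1 = 4(y−1)² ∫₀¹ (1 + ln(1−s+sy))(1−s) ds holds, where the left side is interpreted as 1 at y = 0. -/
open Real Filter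
open scoped Topology

lemma hasDerivAt_sq_log (t : ℝ) :
    HasDerivAt (fun t : ℝ => t ^ 2 * Real.log t) (2 * t * Real.log t + t) t := by
  rcases eq_or_ne t 0 with rfl | ht
  · have hval : (2 * (0:ℝ) * Real.log 0 + 0 : ℝ) = 0 := by simp
    rw [hval, hasDerivAt_iff_tendsto_slope]
    have h : Tendsto (fun t : ℝ => t * Real.log t) (𝓝[≠] (0:ℝ)) (𝓝 (0:ℝ)) := by
      have := Real.continuous_mul_log.tendsto 0
      simpa using this.mono_left nhdsWithin_le_nhds
    apply h.congr'
    filter_upwards [self_mem_nhdsWithin] with t ht0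
    simp only [Set.mem_compl_iff, Set.mem_singleton_iff] at ht0
    rw [slope_def_field]
    field_simp
    ring
  · have h := (hasDerivAt_pow 2 t).mul (Real.hasDerivAt_log ht)
    refine h.congr_deriv ?_
    field_simp
    ring

theorem taylor_identity (y : ℝ) (hy : 0 ≤ y) :
    y ^ 2 * Real.log (y ^ 2) - y ^ 2 + 1 =
      4 * (y - 1) ^ 2 * ∫ s in (0:ℝ)..1, (1 + Real.log (1 - s + s * y)) * (1 - s) := by
  rcases hy.eq_or_lt with rfl | hpos
  · -- y = 0
    simp only [mul_zero, add_zero]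
    have hderiv : ∀ s ∈ Set.uIcc (0:ℝ) 1,
        HasDerivAt (fun s : ℝ => s - s^2/2 + (1-s)^2/4 - (1-s)^2 * Real.log (1-s) / 2)
          ((1 + Real.log (1 - s)) * (1 - s)) s := by
      intro s _
      have hq : HasDerivAt (fun s : ℝ => 1 - s) (-1) s := (hasDerivAt_id s).const_sub 1
      have hsq : HasDerivAt (fun s : ℝ => (1-s)^2) (2 * (1-s)^1 * (-1)) s := hq.pow 2
      have hlog : HasDerivAt (fun s : ℝ => (1-s)^2 * Real.log (1-s))
          ((2 * (1-s) * Real.log (1-s) + (1-s)) * (-1)) s :=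
        (hasDerivAt_sq_log (1-s)).comp s hq
      have hF := (((hasDerivAt_id s).sub ((hasDerivAt_pow 2 s).div_const 2)).add
          (hsq.div_const 4)).sub (hlog.div_const 2)
      refine hF.congr_deriv ?_
      ring
    have hint : IntervalIntegrable (fun s : ℝ => (1 + Real.log (1 - s)) * (1 - s))
        MeasureTheory.volume 0 1 := by
      have : (fun s : ℝ => (1 + Real.log (1 - s)) * (1 - s)) =
          fun s : ℝ => (1 - s) + (1 - s) * Real.log (1 - s) := by
        funext s; ring
      rw [this]
      exact ((continuous_const.sub continuous_id).add
        (Real.continuous_mul_log.comp (continuous_const.sub continuous_id))).intervalIntegrable 0 1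
    rw [intervalIntegral.integral_eq_sub_of_hasDerivAt hderiv hint]
    norm_num
  · rcases eq_or_ne y 1 with rfl | hne
    · norm_num
    · -- 0 < y, y ≠ 1
      have ha : y - 1 ≠ 0 := sub_ne_zero.mpr hne
      simp only [show ∀ s : ℝ, 1 - s + s * y = 1 + (y-1) * s from fun s => by ring]
      set F : ℝ → ℝ := fun s => s - s^2/2 +
        (y * ((1+(y-1)*s) * Real.log (1+(y-1)*s) - (1+(y-1)*s))
          - (1+(y-1)*s)^2 * Real.log (1+(y-1)*s) / 2 + (1+(y-1)*s)^2 / 4) / (y-1)^2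
        with hFdef
      have hupos : ∀ s ∈ Set.uIcc (0:ℝ) 1, 0 < 1 + (y-1) * s := by
        intro s hs
        rw [Set.uIcc_of_le zero_le_one] at hs
        rcases lt_or_ge s 1 with h | h
        · nlinarith [mul_nonneg hs.1 hpos.le]
        · have hs1 : s = 1 := le_antisymm hs.2 h
          subst hs1; linarith
      have hderiv : ∀ s ∈ Set.uIcc (0:ℝ) 1,
          HasDerivAt F ((1 + Real.log (1 + (y-1) * s)) * (1 - s)) s := by
        intro s hs
        have hu : HasDerivAt (fun s : ℝ => 1 + (y-1) * s) ((y-1) * 1) s :=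
          ((hasDerivAt_id s).const_mul (y-1)).const_add 1
        have hup := hupos s hs
        have hmlog : HasDerivAt (fun s : ℝ => (1+(y-1)*s) * Real.log (1+(y-1)*s))
            ((Real.log (1+(y-1)*s) + 1) * ((y-1)*1)) s :=
          by have := (Real.hasDerivAt_mul_log hup.ne').comp s hu; exact this
        have hsqlog : HasDerivAt (fun s : ℝ => (1+(y-1)*s)^2 * Real.log (1+(y-1)*s))
            ((2 * (1+(y-1)*s) * Real.log (1+(y-1)*s) + (1+(y-1)*s)) * ((y-1)*1)) s :=
          by have := (hasDerivAt_sq_log (1+(y-1)*s)).comp s hu; exact this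
        have hsq : HasDerivAt (fun s : ℝ => (1+(y-1)*s)^2)
            (2 * (1+(y-1)*s)^1 * ((y-1)*1)) s := hu.pow 2
        have hF := ((hasDerivAt_id s).sub ((hasDerivAt_pow 2 s).div_const 2)).add
          (((((hmlog.sub hu).const_mul y).sub (hsqlog.div_const 2)).add
            (hsq.div_const 4)).div_const ((y-1)^2))
        refine hF.congr_deriv ?_
        field_simp
        ring
      have hint : IntervalIntegrable (fun s : ℝ => (1 + Real.log (1 + (y-1) * s)) * (1 - s))
          MeasureTheory.volume 0 1 := by
        apply ContinuousOn.intervalIntegrable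
        apply ContinuousOn.mul
        · exact continuousOn_const.add
            (((continuousOn_const.add (continuousOn_const.mul continuousOn_id))).log
              fun x hx => (hupos x hx).ne')
        · exact continuousOn_const.sub continuousOn_id
      rw [intervalIntegral.integral_eq_sub_of_hasDerivAt hderiv hint]
      simp only [hFdef]
      rw [show (1:ℝ) + (y-1)*1 = y by ring, show (1:ℝ) + (y-1)*0 = 1 by ring]
      rw [Real.log_pow, Real.log_one]
      push_cast
      field_simp
      ring
end

section
/- There exist constants c, C > 0 such that for all real y ≥ 0, c·(y−1)²·ln(2+y) ≤ y² ln(y²) − y² + 1 ≤ C·(y−1)²·ln(2+y), where the middle expression is interpreted as 1 at y = 0. -/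
private lemma ylogy (y : ℝ) (hy : 0 ≤ y) : y - 1 ≤ y * Real.log y := by
  rcases eq_or_lt_of_le hy with h | h
  · simp [← h]
  · have h1 : Real.log y⁻¹ ≤ y⁻¹ - 1 := Real.log_le_sub_one_of_pos (by positivity)
    rw [Real.log_inv] at h1
    have h2 : y * y⁻¹ = 1 := mul_inv_cancel₀ h.ne'
    nlinarith [mul_le_mul_of_nonneg_left h1 hy]

private lemma log_sq (y : ℝ) : Real.log (y ^ 2) = 2 * Real.log y := by
  rw [Real.log_pow]; push_cast; ring

private lemma lower_base (y : ℝ) (hy : 0 ≤ y) :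
    (y - 1) ^ 2 ≤ y ^ 2 * Real.log (y ^ 2) - y ^ 2 + 1 := by
  rw [log_sq]
  nlinarith [mul_le_mul_of_nonneg_left (ylogy y hy) hy]

private lemma upper_base (y : ℝ) :
    y ^ 2 * Real.log (y ^ 2) ≤ y ^ 2 * (y ^ 2 - 1) := by
  rcases eq_or_ne y 0 with h | h
  · simp [h]
  · exact mul_le_mul_of_nonneg_left
      (Real.log_le_sub_one_of_pos (by positivity)) (sq_nonneg y)

private lemma exp_two_bounds : 5 < Real.exp 2 ∧ Real.exp 2 < 9 := by
  have h : Real.exp 2 = Real.exp 1 * Real.exp 1 := by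
    rw [show (2 : ℝ) = 1 + 1 by norm_num, Real.exp_add]
  constructor
  · nlinarith [Real.exp_one_gt_d9]
  · nlinarith [Real.exp_one_lt_d9, Real.exp_pos 1]

theorem energy_equiv :
    ∃ c > (0:ℝ), ∃ C > (0:ℝ), ∀ y : ℝ, 0 ≤ y →
      c * (y - 1) ^ 2 * Real.log (2 + y) ≤ y ^ 2 * Real.log (y ^ 2) - y ^ 2 + 1 ∧
      y ^ 2 * Real.log (y ^ 2) - y ^ 2 + 1 ≤ C * (y - 1) ^ 2 * Real.log (2 + y) := by
  refine ⟨1/2, by norm_num, 24, by norm_num, fun y hy => ?_⟩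
  have hlog2 : (0.6931471803 : ℝ) < Real.log 2 := Real.log_two_gt_d9
  have hmono : Real.log 2 ≤ Real.log (2 + y) := Real.log_le_log (by norm_num) (by linarith)
  obtain ⟨he5, he9⟩ := exp_two_bounds
  rcases le_or_gt y 3 with hy3 | hy3
  · -- small y
    constructor
    · -- lower bound
      have h5 : Real.log (2 + y) ≤ Real.log 5 := Real.log_le_log (by linarith) (by linarith)
      have hl5 : Real.log 5 < 2 := by
        rw [Real.log_lt_iff_lt_exp (by norm_num)]; exact he5
      nlinarith [lower_base y hy, sq_nonneg (y - 1)]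
    · -- upper bound
      have hub := upper_base y
      have h0 : (0:ℝ) ≤ (16 - (y + 1) ^ 2) * (y - 1) ^ 2 :=
        mul_nonneg (by nlinarith) (sq_nonneg _)
      have h1 : (y - 1) ^ 2 * (y + 1) ^ 2 ≤ 16 * (y - 1) ^ 2 := by nlinarith
      have h2 : 16 * (y - 1) ^ 2 ≤ 24 * (y - 1) ^ 2 * Real.log (2 + y) := by
        nlinarith [sq_nonneg (y - 1)]
      nlinarith
  · -- large y
    have hl9 : (2 : ℝ) < Real.log (y ^ 2) := by
      rw [Real.lt_log_iff_exp_lt (by positivity)]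
      nlinarith
    constructor
    · -- lower bound
      have hle : (y - 1) ^ 2 * Real.log (2 + y) ≤ y ^ 2 * Real.log (y ^ 2) := by
        apply mul_le_mul (by nlinarith) (Real.log_le_log (by linarith) (by nlinarith))
          (Real.log_nonneg (by linarith)) (sq_nonneg y)
      nlinarith [sq_nonneg y]
    · -- upper bound
      have hlylog : Real.log y ≤ Real.log (2 + y) := Real.log_le_log (by linarith) (by linarith)
      have hpos : (0 : ℝ) ≤ Real.log (2 + y) := by linarith
      have hsq : y ^ 2 ≤ (9 / 4) * (y - 1) ^ 2 := by nlinarith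
      have key : y ^ 2 * Real.log (y ^ 2) ≤ 24 * (y - 1) ^ 2 * Real.log (2 + y) := by
        rw [log_sq]
        calc y ^ 2 * (2 * Real.log y) ≤ (9/4) * (y - 1) ^ 2 * (2 * Real.log (2 + y)) := by
              apply mul_le_mul hsq (by nlinarith [Real.log_nonneg (show (1:ℝ) ≤ y by linarith)])
                (by nlinarith [Real.log_nonneg (show (1:ℝ) ≤ y by linarith)]) (by positivity)
          _ ≤ 24 * (y - 1) ^ 2 * Real.log (2 + y) := by nlinarith [sq_nonneg (y - 1)]
      nlinarith
end

section
/- Let φ : ℝ → ℂ be a bounded C² function satisfying φ'' = λ φ ln|φ|² (with λ > 0, and convention φ ln|φ|² = 0 where φ = 0), such that φ' ∈ L² and |φ|² ln|φ|² − |φ|² + 1 ∈ L¹. Then |φ'(x)|² = λ(|φ(x)|² ln|φ(x)|² − |φ(x)|² + 1) for all x ∈ ℝ. -/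
open MeasureTheory Real Filter

private lemma tlogt_bound {t : ℝ} (h0 : 0 ≤ t) (h1 : t ≤ 1) :
    |t * Real.log t| ≤ 4 * Real.sqrt t * Real.sqrt (Real.sqrt t) := by
  rcases eq_or_lt_of_le h0 with h | h
  · simp [← h]
  · have hs : 0 < Real.sqrt t := Real.sqrt_pos.mpr h
    have hss : 0 < Real.sqrt (Real.sqrt t) := Real.sqrt_pos.mpr hs
    have hlog : Real.log t ≤ 0 := Real.log_nonpos h0 h1
    have habs : |t * Real.log t| = t * (-Real.log t) := by
      rw [abs_mul, abs_of_pos h, abs_of_nonpos hlog]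
    rw [habs]
    have hinv : -Real.log t = Real.log t⁻¹ := (Real.log_inv t).symm
    have hkey : Real.log t⁻¹ ≤ 4 * (Real.sqrt (Real.sqrt t))⁻¹ := by
      have h2 : Real.log t⁻¹ = 4 * Real.log (Real.sqrt (Real.sqrt t⁻¹)) := by
        rw [Real.log_sqrt (Real.sqrt_nonneg _), Real.log_sqrt (le_of_lt (inv_pos.mpr h))]
        ring
      rw [h2, Real.sqrt_inv, Real.sqrt_inv]
      have h3 := Real.log_le_self (le_of_lt (inv_pos.mpr hss))
      linarith
    have h4 : t * (-Real.log t) ≤ t * (4 * (Real.sqrt (Real.sqrt t))⁻¹) := by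
      rw [hinv]; exact mul_le_mul_of_nonneg_left hkey h0
    refine h4.trans (le_of_eq ?_)
    have e1 : Real.sqrt t * Real.sqrt t = t := Real.mul_self_sqrt h0
    have e2 : Real.sqrt (Real.sqrt t) * Real.sqrt (Real.sqrt t) = Real.sqrt t :=
      Real.mul_self_sqrt (Real.sqrt_nonneg t)
    field_simp
    nlinarith [hss, hs]

private lemma hasDerivAt_mul_log_zero (f : ℝ → ℝ) (x₀ K : ℝ) (hK : 0 ≤ K)
    (hnn : ∀ x, 0 ≤ f x)
    (hb : ∀ᶠ x in nhds x₀, f x ≤ K * (x - x₀) ^ 2) :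
    HasDerivAt (fun x => f x * Real.log (f x)) 0 x₀ := by
  have hf0 : f x₀ = 0 := le_antisymm (by simpa using hb.self_of_nhds) (hnn x₀)
  rw [hasDerivAt_iff_tendsto_slope]
  have hcont : Continuous fun x : ℝ => 4 * Real.sqrt K * Real.sqrt (Real.sqrt K * |x - x₀|) := by
    fun_prop
  have hgt : Tendsto (fun x : ℝ => 4 * Real.sqrt K * Real.sqrt (Real.sqrt K * |x - x₀|))
      (nhdsWithin x₀ {x₀}ᶜ) (nhds 0) := by
    have h0 := (hcont.tendsto x₀).mono_left (nhdsWithin_le_nhds (s := {x₀}ᶜ))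
    simpa using h0
  have h1 : ∀ᶠ x in nhds x₀, f x ≤ 1 := by
    have ht : Tendsto (fun x : ℝ => K * (x - x₀) ^ 2) (nhds x₀) (nhds 0) := by
      have : Continuous fun x : ℝ => K * (x - x₀) ^ 2 := by fun_prop
      simpa using this.tendsto x₀
    filter_upwards [hb, ht.eventually_lt_const one_pos] with x hx hx' using hx.trans hx'.le
  apply squeeze_zero_norm' _ hgt
  filter_upwards [nhdsWithin_le_nhds hb, nhdsWithin_le_nhds h1, self_mem_nhdsWithin]
    with x hbx h1x hxne
  have hd : (0:ℝ) < |x - x₀| := by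
    simp only [Set.mem_compl_iff, Set.mem_singleton_iff] at hxne
    exact abs_pos.mpr (sub_ne_zero.mpr hxne)
  have hslope : slope (fun x => f x * Real.log (f x)) x₀ x
      = (f x * Real.log (f x)) / (x - x₀) := by
    rw [slope_def_field, hf0]; simp [div_eq_inv_mul]
  rw [hslope]
  have hnum : |f x * Real.log (f x)|
      ≤ 4 * (Real.sqrt K * |x - x₀|) * Real.sqrt (Real.sqrt K * |x - x₀|) := by
    have b1 : Real.sqrt (f x) ≤ Real.sqrt K * |x - x₀| := by
      have := Real.sqrt_le_sqrt hbx
      rwa [Real.sqrt_mul hK, Real.sqrt_sq_eq_abs] at this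
    have b2 : Real.sqrt (Real.sqrt (f x)) ≤ Real.sqrt (Real.sqrt K * |x - x₀|) :=
      Real.sqrt_le_sqrt b1
    have b3 := tlogt_bound (hnn x) h1x
    have hsn : (0:ℝ) ≤ Real.sqrt (f x) := Real.sqrt_nonneg _
    have hssn : (0:ℝ) ≤ Real.sqrt (Real.sqrt (f x)) := Real.sqrt_nonneg _
    nlinarith [Real.sqrt_nonneg (Real.sqrt K * |x - x₀|), Real.sqrt_nonneg K]
  calc ‖f x * Real.log (f x) / (x - x₀)‖
      = |f x * Real.log (f x)| / |x - x₀| := by rw [Real.norm_eq_abs, abs_div]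
    _ ≤ (4 * (Real.sqrt K * |x - x₀|) * Real.sqrt (Real.sqrt K * |x - x₀|)) / |x - x₀| := by
        gcongr
    _ = 4 * Real.sqrt K * Real.sqrt (Real.sqrt K * |x - x₀|) := by
        field_simp

private lemma hasDerivAt_absSq {u : ℝ → ℂ} {u' : ℂ} {x : ℝ} (h : HasDerivAt u u' x) :
    HasDerivAt (fun y => ‖u y‖ ^ 2)
      (2 * ((u x).re * u'.re + (u x).im * u'.im)) x := by
  have hre : HasDerivAt (fun y => (u y).re) u'.re x :=
    Complex.reCLM.hasFDerivAt.comp_hasDerivAt x h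
  have him : HasDerivAt (fun y => (u y).im) u'.im x :=
    Complex.imCLM.hasFDerivAt.comp_hasDerivAt x h
  have heq : (fun y => ‖u y‖ ^ 2)
      = fun y => (u y).re * (u y).re + (u y).im * (u y).im := by
    funext y; rw [Complex.sq_norm, Complex.normSq_apply]
  rw [heq]
  have h2 := (hre.mul hre).add (him.mul him)
  refine h2.congr_deriv ?_
  ring

theorem energy_ode (lam : ℝ) (hlam : 0 < lam) (φ : ℝ → ℂ)
    (hreg : ContDiff ℝ 2 φ)
    (hbdd : ∃ M, ∀ x, ‖φ x‖ ≤ M)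
    (hode : ∀ x, deriv (deriv φ) x =
      (lam : ℂ) * φ x * (Real.log (‖φ x‖ ^ 2) : ℂ))
    (hderivL2 : MemLp (deriv φ) 2 (volume : Measure ℝ))
    (hpotL1 : Integrable (fun x =>
      ‖φ x‖ ^ 2 * Real.log (‖φ x‖ ^ 2) -
        ‖φ x‖ ^ 2 + 1) (volume : Measure ℝ)) :
    ∀ x : ℝ, ‖deriv φ x‖ ^ 2 =
      lam * (‖φ x‖ ^ 2 * Real.log (‖φ x‖ ^ 2) -
        ‖φ x‖ ^ 2 + 1) := by
  -- regularity
  have h2 : ContDiff ℝ ((1 : ℕ) + 1) φ := by exact_mod_cast hreg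
  rw [contDiff_succ_iff_deriv] at h2
  have hφdiff : Differentiable ℝ φ := h2.1
  have hψcont : Continuous (deriv φ) := h2.2.2.continuous
  have hψdiff : Differentiable ℝ (deriv φ) := h2.2.2.differentiable (by norm_num)
  have hφd : ∀ x, HasDerivAt φ (deriv φ x) x := fun x => (hφdiff x).hasDerivAt
  have hψd : ∀ x, HasDerivAt (deriv φ) (deriv (deriv φ) x) x := fun x => (hψdiff x).hasDerivAt
  set f : ℝ → ℝ := fun x => ‖φ x‖ ^ 2 with hf_def
  set D : ℝ → ℝ := fun x => (φ x).re * (deriv φ x).re + (φ x).im * (deriv φ x).im with hD_def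
  have hfnn : ∀ x, 0 ≤ f x := fun x => by positivity
  have hfD : ∀ x, HasDerivAt f (2 * D x) x := fun x => hasDerivAt_absSq (hφd x)
  -- derivative of the potential term
  have hV : ∀ x, HasDerivAt (fun y => f y * Real.log (f y) - f y + 1)
      (2 * D x * Real.log (f x)) x := by
    intro x
    by_cases hne : f x = 0
    · -- φ x = 0
      have hφx : φ x = 0 := by
        have : ‖φ x‖ = 0 := by
          have := hne; simp only [hf_def] at this; nlinarith [norm_nonneg (φ x)]
        simpa using this
      have hD0 : D x = 0 := by simp [hD_def, hφx]
      -- local quadratic bound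
      obtain ⟨C, hC⟩ := (isCompact_Icc (a := x - 1) (b := x + 1)).exists_bound_of_continuousOn
        (hψcont.continuousOn (s := Set.Icc (x-1) (x+1)))
      set C' : ℝ := max C 0 with hC'_def
      have hC'bd : ∀ y ∈ Set.Icc (x-1) (x+1), ‖deriv φ y‖ ≤ C' :=
        fun y hy => (hC y hy).trans (le_max_left _ _)
      have hmv : ∀ y ∈ Set.Icc (x-1) (x+1), ‖φ y‖ ≤ C' * |y - x| := by
        intro y hy
        have hxmem : x ∈ Set.Icc (x-1) (x+1) := Set.mem_Icc.mpr ⟨by linarith, by linarith⟩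
        have := Convex.norm_image_sub_le_of_norm_hasDerivWithin_le (f := φ)
          (f' := deriv φ) (s := Set.Icc (x-1) (x+1)) (x := x) (y := y)
          (fun z _ => (hφd z).hasDerivWithinAt) hC'bd (convex_Icc _ _) hxmem hy
        simpa [hφx, Real.norm_eq_abs] using this
      have hbd : ∀ᶠ y in nhds x, f y ≤ C' ^ 2 * (y - x) ^ 2 := by
        filter_upwards [Ioo_mem_nhds (by linarith : x - 1 < x) (by linarith : x < x + 1)]
          with y hy
        have h1 := hmv y (Set.Ioo_subset_Icc_self hy)
        have h2 : ‖φ y‖ = ‖φ y‖ := rfl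
        have h3 : (0:ℝ) ≤ ‖φ y‖ := norm_nonneg _
        have h4 : ‖φ y‖ ^ 2 ≤ (C' * |y - x|) ^ 2 := by
          exact pow_le_pow_left₀ h3 h1 2
        simp only [hf_def]
        rw [h2]
        calc ‖φ y‖ ^ 2 ≤ (C' * |y - x|) ^ 2 := h4
          _ = C' ^ 2 * (y - x) ^ 2 := by rw [mul_pow, sq_abs]
      have hml := hasDerivAt_mul_log_zero f x (C' ^ 2) (sq_nonneg _) hfnn hbd
      have hfin := (hml.sub (hfD x)).add_const 1
      refine hfin.congr_deriv ?_
      rw [hD0]; ring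
    · have hlog : HasDerivAt (fun y => Real.log (f y)) (2 * D x / f x) x :=
        (hfD x).log hne
      have hfin := (((hfD x).mul hlog).sub (hfD x)).add_const 1
      refine hfin.congr_deriv ?_
      field_simp
      ring
  -- derivative of the kinetic term
  have hF : ∀ x, HasDerivAt (fun y => ‖deriv φ y‖ ^ 2)
      (lam * (2 * D x * Real.log (f x))) x := by
    intro x
    have h0 := hasDerivAt_absSq (hψd x)
    rw [hode x] at h0
    convert h0 using 1
    simp only [hf_def, hD_def, Complex.mul_re, Complex.mul_im, Complex.ofReal_re,
      Complex.ofReal_im]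
    ring
  -- the energy is constant
  set g : ℝ → ℝ := fun x => ‖deriv φ x‖ ^ 2 -
      lam * (f x * Real.log (f x) - f x + 1) with hg_def
  have hg : ∀ x, HasDerivAt g 0 x := by
    intro x
    have := (hF x).sub ((hV x).const_mul lam)
    refine this.congr_deriv ?_
    ring
  have hconst : ∀ x, g x = g 0 := fun x =>
    is_const_of_deriv_eq_zero (fun y => (hg y).differentiableAt) (fun y => (hg y).deriv) x 0
  -- integrability forces the constant to be zero
  have IntF : Integrable (fun x => ‖deriv φ x‖ ^ 2) volume := by
    have := (memLp_two_iff_integrable_sq_norm hderivL2.aestronglyMeasurable).mp hderivL2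
    simpa using this
  have Intg : Integrable g volume := IntF.sub (hpotL1.const_mul lam)
  have hg0 : g 0 = 0 := by
    have hconstInt : Integrable (fun _ : ℝ => g 0) volume := by
      have heq : g = fun _ => g 0 := funext hconst
      rwa [heq] at Intg
    rcases integrable_const_iff.mp hconstInt with h | h
    · exact h
    · haveI := h; exact absurd (measure_lt_top volume Set.univ) (by rw [Real.volume_univ]; exact lt_irrefl _)
  intro x
  have hx : g x = 0 := (hconst x).trans hg0
  simp only [hg_def, hf_def] at hx
  linarith
end

section
/- Let λ > 0. There exists a unique global C¹ solution φ₀ : ℝ → ℝ of the ODE φ₀' = √λ · √(φ₀² ln(φ₀²) − φ₀² + 1) with φ₀(0) = 0 (where the radicand is interpreted as 1 at φ₀ = 0). This solution is strictly increasing, takes values in (−1, 1), and satisfies lim_{x→±∞} φ₀(x) = ±1. -/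
open Filter Set intervalIntegral MeasureTheory

noncomputable def gg (y : ℝ) : ℝ := y^2 * Real.log (y^2) - y^2 + 1
noncomputable def hh (y : ℝ) : ℝ := Real.sqrt (gg y)
noncomputable def HH (y : ℝ) : ℝ := ∫ t in (0:ℝ)..y, (hh t)⁻¹

lemma hh_nonneg (y : ℝ) : 0 ≤ hh y := Real.sqrt_nonneg _



lemma gg_le (y : ℝ) : gg y ≤ (y^2 - 1)^2 := by
  rcases eq_or_ne y 0 with h|h
  · simp [gg, h]
  · have hu : 0 < y^2 := by positivity
    have h1 := Real.log_le_sub_one_of_pos hu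
    unfold gg; nlinarith

lemma gg_pos {y : ℝ} (h1 : y^2 ≠ 1) : 0 < gg y := by
  rcases eq_or_ne y 0 with h|h
  · simp [gg, h]
  · have hu : 0 < y^2 := by positivity
    have hne : (y^2)⁻¹ ≠ 1 := by
      intro hc
      exact h1 (by rw [← inv_inv (y^2), hc, inv_one])
    have h2 := Real.log_lt_sub_one_of_pos (inv_pos.2 hu) hne
    rw [Real.log_inv] at h2
    have h3 : Real.log (y^2) > 1 - (y^2)⁻¹ := by linarith
    have h4 : y^2 * Real.log (y^2) > y^2 * (1 - (y^2)⁻¹) :=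
      (mul_lt_mul_iff_right₀ hu).2 h3
    have h5 : y^2 * (1 - (y^2)⁻¹) = y^2 - 1 := by field_simp
    unfold gg; nlinarith

lemma hh_cont : Continuous hh := by
  apply Real.continuous_sqrt.comp
  unfold gg
  have : Continuous fun y : ℝ => (y^2) * Real.log (y^2) :=
    Real.continuous_mul_log.comp (continuous_pow 2)
  fun_prop

lemma hh_pos {y : ℝ} (hy : y ∈ Ioo (-1:ℝ) 1) : 0 < hh y := by
  apply Real.sqrt_pos.2
  apply gg_pos
  obtain ⟨h1, h2⟩ := hy
  nlinarith [sq_nonneg y]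

lemma hh_le (y : ℝ) : hh y ≤ |y^2 - 1| := by
  rw [← Real.sqrt_sq_eq_abs]
  exact Real.sqrt_le_sqrt (gg_le y)


lemma invh_contOn : ContinuousOn (fun t => (hh t)⁻¹) (Ioo (-1:ℝ) 1) :=
  ContinuousOn.inv₀ hh_cont.continuousOn (fun t ht => (hh_pos ht).ne')

lemma uIcc_sub {y z : ℝ} (hy : y ∈ Ioo (-1:ℝ) 1) (hz : z ∈ Ioo (-1:ℝ) 1) :
    uIcc y z ⊆ Ioo (-1:ℝ) 1 :=
  (Set.ordConnected_Ioo).uIcc_subset hy hz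

lemma invh_intble {y z : ℝ} (hy : y ∈ Ioo (-1:ℝ) 1) (hz : z ∈ Ioo (-1:ℝ) 1) :
    IntervalIntegrable (fun t => (hh t)⁻¹) volume y z :=
  (invh_contOn.mono (uIcc_sub hy hz)).intervalIntegrable

lemma HH_deriv {y : ℝ} (hy : y ∈ Ioo (-1:ℝ) 1) :
    HasDerivAt HH (hh y)⁻¹ y := by
  have h0 : (0:ℝ) ∈ Ioo (-1:ℝ) 1 := by norm_num
  exact intervalIntegral.integral_hasDerivAt_right (invh_intble h0 hy)
    (invh_contOn.stronglyMeasurableAtFilter isOpen_Ioo y hy)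
    (invh_contOn.continuousAt (isOpen_Ioo.mem_nhds hy))

lemma HH_contOn : ContinuousOn HH (Ioo (-1:ℝ) 1) :=
  fun y hy => ((HH_deriv hy).continuousAt).continuousWithinAt

lemma HH_mono : StrictMonoOn HH (Ioo (-1:ℝ) 1) := by
  apply strictMonoOn_of_deriv_pos (convex_Ioo _ _) HH_contOn
  intro x hx
  rw [interior_Ioo] at hx
  rw [(HH_deriv hx).deriv]
  exact inv_pos.2 (hh_pos hx)

lemma HH_odd (y : ℝ) : HH (-y) = - HH y := by
  unfold HH
  have heven : ∀ t : ℝ, (hh (-t))⁻¹ = (hh t)⁻¹ := by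
    intro t; unfold hh gg; ring_nf
  calc (∫ t in (0:ℝ)..(-y), (hh t)⁻¹)
      = ∫ t in (0:ℝ)..(-y), (hh (-t))⁻¹ := by simp_rw [heven]
    _ = ∫ t in (y:ℝ)..(0:ℝ), (hh t)⁻¹ := by
        rw [intervalIntegral.integral_comp_neg (fun t => (hh t)⁻¹)]
        norm_num
    _ = - ∫ t in (0:ℝ)..y, (hh t)⁻¹ := intervalIntegral.integral_symm _ _

lemma HH_lb {y : ℝ} (hy0 : 0 ≤ y) (hy1 : y < 1) :
    -(1/2) * Real.log (1 - y) ≤ HH y := by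
  have hyI : y ∈ Ioo (-1:ℝ) 1 := ⟨by linarith, hy1⟩
  have h0 : (0:ℝ) ∈ Ioo (-1:ℝ) 1 := by norm_num
  have hF : ∀ t ∈ uIcc (0:ℝ) y, HasDerivAt (fun s => -(1/2) * Real.log (1 - s))
      ((2*(1-t))⁻¹) t := by
    intro t ht
    rw [uIcc_of_le hy0] at ht
    have h1t : (1:ℝ) - t ≠ 0 := by
      have := ht.2; intro hc; nlinarith [hy1]
    have : HasDerivAt (fun s : ℝ => 1 - s) (-1) t := by
      simpa using (hasDerivAt_id t).const_sub 1
    have := (Real.hasDerivAt_log h1t).comp t this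
    have h2 := this.const_mul (-(1/2) : ℝ)
    refine h2.congr_deriv ?_
    field_simp
  have hcont : ContinuousOn (fun t : ℝ => (2*(1-t))⁻¹) (uIcc 0 y) := by
    apply ContinuousOn.inv₀ (by fun_prop)
    intro t ht
    rw [uIcc_of_le hy0] at ht
    have := ht.2; intro hc; nlinarith [hy1]
  have hint2 : IntervalIntegrable (fun t : ℝ => (2*(1-t))⁻¹) volume 0 y :=
    hcont.intervalIntegrable
  have heq : (∫ t in (0:ℝ)..y, (2*(1-t))⁻¹) = -(1/2) * Real.log (1-y) := by
    rw [intervalIntegral.integral_eq_sub_of_hasDerivAt hF hint2]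
    simp
  rw [← heq]
  apply intervalIntegral.integral_mono_on hy0 hint2 (invh_intble h0 hyI)
  intro t ht
  have htI : t ∈ Ioo (-1:ℝ) 1 := ⟨by linarith [ht.1], lt_of_le_of_lt ht.2 hy1⟩
  have h1 : hh t ≤ 2*(1-t) := by
    calc hh t ≤ |t^2 - 1| := hh_le t
      _ = 1 - t^2 := by rw [abs_of_nonpos (by nlinarith [htI.1, htI.2])]; ring
      _ ≤ 2*(1-t) := by nlinarith [htI.1, htI.2]
  have h2 : 0 < hh t := hh_pos htI
  have := one_div_le_one_div_of_le h2 h1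
  rw [one_div, one_div] at this
  exact this


lemma HH_zero : HH 0 = 0 := by unfold HH; simp

lemma HH_big (z : ℝ) : ∃ b ∈ Ico (0:ℝ) 1, z ≤ HH b := by
  set b : ℝ := 1 - Real.exp (-(2*|z|)) with hb
  have he1 : Real.exp (-(2*|z|)) ≤ 1 := by
    apply Real.exp_le_one_iff.2
    simp [abs_nonneg]
  have he0 : 0 < Real.exp (-(2*|z|)) := Real.exp_pos _
  have hbI : b ∈ Ico (0:ℝ) 1 := ⟨by rw [hb]; linarith, by rw [hb]; linarith⟩
  refine ⟨b, hbI, ?_⟩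
  have := HH_lb hbI.1 hbI.2
  have hlog : Real.log (1 - b) = -(2*|z|) := by
    rw [hb]; simp [Real.log_exp]
  calc z ≤ |z| := le_abs_self z
    _ = -(1/2) * Real.log (1 - b) := by rw [hlog]; ring
    _ ≤ HH b := this

lemma HH_surj (z : ℝ) : ∃ y ∈ Ioo (-1:ℝ) 1, HH y = z := by
  obtain ⟨b, hbI, hbz⟩ := HH_big z
  obtain ⟨c, hcI, hcz'⟩ := HH_big (-z)
  have hcz : HH (-c) ≤ z := by rw [HH_odd]; linarith
  have hmB : -c ∈ Ioo (-1:ℝ) 1 := ⟨by linarith [hcI.2], by linarith [hcI.1]⟩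
  have hbB : b ∈ Ioo (-1:ℝ) 1 := ⟨by linarith [hbI.1], hbI.2⟩
  have hle : -c ≤ b := by linarith [hcI.1, hbI.1]
  have hsub : Icc (-c) b ⊆ Ioo (-1:ℝ) 1 := by
    intro t ht; exact ⟨lt_of_lt_of_le hmB.1 ht.1, lt_of_le_of_lt ht.2 hbB.2⟩
  have := intermediate_value_Icc hle (HH_contOn.mono hsub)
  obtain ⟨y, hyI, hyz⟩ := this ⟨hcz, hbz⟩
  exact ⟨y, hsub hyI, hyz⟩

noncomputable def φ0 (lam : ℝ) (x : ℝ) : ℝ :=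
  Classical.choose (HH_surj (Real.sqrt lam * x))

lemma φ0_mem (lam : ℝ) (x : ℝ) : φ0 lam x ∈ Ioo (-1:ℝ) 1 :=
  (Classical.choose_spec (HH_surj (Real.sqrt lam * x))).1

lemma HH_φ0 (lam : ℝ) (x : ℝ) : HH (φ0 lam x) = Real.sqrt lam * x :=
  (Classical.choose_spec (HH_surj (Real.sqrt lam * x))).2

lemma φ0_mono (lam : ℝ) (hlam : 0 < lam) : StrictMono (φ0 lam) := by
  intro x y hxy
  have hs : 0 < Real.sqrt lam := Real.sqrt_pos.2 hlam
  by_contra hc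
  push_neg at hc
  have := HH_mono.monotoneOn (φ0_mem lam y) (φ0_mem lam x) hc
  rw [HH_φ0, HH_φ0] at this
  nlinarith

lemma φ0_zero (lam : ℝ) : φ0 lam 0 = 0 := by
  have h0 : (0:ℝ) ∈ Ioo (-1:ℝ) 1 := by norm_num
  have h := HH_φ0 lam 0
  rw [mul_zero] at h
  exact HH_mono.injOn (φ0_mem lam 0) h0 (h.trans HH_zero.symm)

lemma φ0_surj (lam : ℝ) (hlam : 0 < lam) : range (φ0 lam) = Ioo (-1:ℝ) 1 := by
  apply subset_antisymm
  · rintro _ ⟨x, rfl⟩; exact φ0_mem lam x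
  · intro y hy
    have hs : Real.sqrt lam ≠ 0 := (Real.sqrt_pos.2 hlam).ne'
    refine ⟨HH y / Real.sqrt lam, ?_⟩
    apply HH_mono.injOn (φ0_mem lam _) hy
    rw [HH_φ0]
    field_simp
  
lemma φ0_cont (lam : ℝ) (hlam : 0 < lam) : Continuous (φ0 lam) :=
  ((φ0_mono lam hlam).isEmbedding_of_ordConnected
    (by rw [φ0_surj lam hlam]; exact ordConnected_Ioo)).continuous

lemma φ0_hasDeriv (lam : ℝ) (hlam : 0 < lam) (x : ℝ) :
    HasDerivAt (φ0 lam) (Real.sqrt lam * hh (φ0 lam x)) x := by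
  have hs : 0 < Real.sqrt lam := Real.sqrt_pos.2 hlam
  -- inv z := φ0 (z / √lam) is a right inverse of HH
  set inv : ℝ → ℝ := fun z => φ0 lam (z / Real.sqrt lam) with hinv
  have hinvx : ∀ z, HH (inv z) = z := by
    intro z; rw [hinv]; simp only; rw [HH_φ0]; field_simp
  have hic : Continuous inv := (φ0_cont lam hlam).comp (by fun_prop)
  have hmem : ∀ z, inv z ∈ Ioo (-1:ℝ) 1 := fun z => φ0_mem lam _
  have hder : ∀ z : ℝ, HasDerivAt inv ((hh (inv z))⁻¹)⁻¹ z := by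
    intro z
    exact HasDerivAt.of_local_left_inverse (hic.continuousAt)
      (HH_deriv (hmem z)) (inv_ne_zero (hh_pos (hmem z)).ne')
      (Eventually.of_forall hinvx)
  have key : HasDerivAt inv (hh (inv (Real.sqrt lam * x))) (Real.sqrt lam * x) := by
    have := hder (Real.sqrt lam * x)
    rwa [inv_inv] at this
  have hlin : HasDerivAt (fun x : ℝ => Real.sqrt lam * x) (Real.sqrt lam) x := by
    simpa using (hasDerivAt_id x).const_mul (Real.sqrt lam)
  have := key.comp x hlin
  have heq : (fun x => inv (Real.sqrt lam * x)) = φ0 lam := by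
    funext t; rw [hinv]; simp only
    congr 1; field_simp
  have this2 : HasDerivAt (φ0 lam) (hh (inv (Real.sqrt lam * x)) * Real.sqrt lam) x := by
    rw [← heq]; exact this
  have heq2 : inv (Real.sqrt lam * x) = φ0 lam x := by
    rw [hinv]; simp only; congr 1; field_simp
  rw [heq2] at this2
  convert this2 using 1; ring


lemma φ0_atTop (lam : ℝ) (hlam : 0 < lam) : Tendsto (φ0 lam) atTop (nhds 1) := by
  have hmono := (φ0_mono lam hlam).monotone
  have hbdd : BddAbove (range (φ0 lam)) :=
    ⟨1, by rintro _ ⟨x, rfl⟩; exact (φ0_mem lam x).2.le⟩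
  have htend := tendsto_atTop_ciSup hmono hbdd
  set L := ⨆ x, φ0 lam x with hL
  have hL1 : L ≤ 1 := ciSup_le fun x => (φ0_mem lam x).2.le
  have hL0 : 0 ≤ L := by
    have := le_ciSup hbdd (0:ℝ)
    rwa [φ0_zero] at this
  rcases eq_or_lt_of_le hL1 with h|h
  · rwa [h] at htend
  · exfalso
    have hLI : L ∈ Ioo (-1:ℝ) 1 := ⟨by linarith, h⟩
    have hHc : ContinuousAt HH L := (HH_deriv hLI).continuousAt
    have h1 : Tendsto (fun x => HH (φ0 lam x)) atTop (nhds (HH L)) :=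
      hHc.tendsto.comp htend
    have h2 : Tendsto (fun x => HH (φ0 lam x)) atTop atTop := by
      simp_rw [HH_φ0]
      exact Tendsto.const_mul_atTop (Real.sqrt_pos.2 hlam) tendsto_id
    exact not_tendsto_atTop_of_tendsto_nhds h1 h2

lemma φ0_atBot (lam : ℝ) (hlam : 0 < lam) : Tendsto (φ0 lam) atBot (nhds (-1)) := by
  have hmono := (φ0_mono lam hlam).monotone
  have hbdd : BddBelow (range (φ0 lam)) :=
    ⟨-1, by rintro _ ⟨x, rfl⟩; exact (φ0_mem lam x).1.le⟩
  have htend := tendsto_atBot_ciInf hmono hbdd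
  set L := ⨅ x, φ0 lam x with hL
  have hL1 : -1 ≤ L := le_ciInf fun x => (φ0_mem lam x).1.le
  have hL0 : L ≤ 0 := by
    have := ciInf_le hbdd (0:ℝ)
    rwa [φ0_zero] at this
  rcases eq_or_lt_of_le hL1 with h|h
  · rwa [← h] at htend
  · exfalso
    have hLI : L ∈ Ioo (-1:ℝ) 1 := ⟨h, by linarith⟩
    have hHc : ContinuousAt HH L := (HH_deriv hLI).continuousAt
    have h1 : Tendsto (fun x => HH (φ0 lam x)) atBot (nhds (HH L)) :=
      hHc.tendsto.comp htend
    have h2 : Tendsto (fun x => HH (φ0 lam x)) atBot atBot := by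
      simp_rw [HH_φ0]
      exact Tendsto.const_mul_atBot (Real.sqrt_pos.2 hlam) tendsto_id
    exact not_tendsto_atBot_of_tendsto_nhds h1 h2

-- Gronwall wrapper
lemma gr0 {f f' : ℝ → ℝ} {K a b : ℝ} (hab : a ≤ b)
    (hf : ∀ x, HasDerivAt f (f' x) x)
    (hb : ∀ x ∈ Icc a b, |f' x| ≤ K * |f x|)
    (ha : f a = 0) : ∀ x ∈ Icc a b, f x = 0 := by
  have hcont : ContinuousOn f (Icc a b) :=
    fun x _ => (hf x).continuousAt.continuousWithinAt
  have key := norm_le_gronwallBound_of_norm_deriv_right_le (δ := 0) (K := K) (ε := 0)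
    hcont (fun x _ => (hf x).hasDerivWithinAt)
    (by rw [ha]; simp)
    (fun x hx => by
      rw [Real.norm_eq_abs, Real.norm_eq_abs, add_zero]
      exact hb x ⟨hx.1, hx.2.le⟩)
  intro x hx
  have := key x hx
  rw [gronwallBound_ε0_δ0, Real.norm_eq_abs] at this
  exact abs_eq_zero.1 (le_antisymm this (abs_nonneg _))

lemma psi_ne {lam : ℝ} (hlam : 0 < lam) {ψ : ℝ → ℝ}
    (hd : ∀ x, HasDerivAt ψ (Real.sqrt lam * hh (ψ x)) x)
    (h0 : ψ 0 = 0) {c : ℝ} (hc : c ^ 2 = 1) (x : ℝ) : ψ x ≠ c := by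
  intro hxc
  have hdiff : Differentiable ℝ ψ := fun y => (hd y).differentiableAt
  have hcont : Continuous ψ := hdiff.continuous
  have habs : |c| = 1 := by
    have : |c| ^ 2 = 1 := by rw [sq_abs, hc]
    nlinarith [abs_nonneg c]
  -- S is the set where ψ = c
  set S : Set ℝ := {y | ψ y = c} with hS
  have hclosed : IsClosed S := isClosed_eq hcont continuous_const
  have hopen : IsOpen S := by
    rw [isOpen_iff_mem_nhds]
    intro x₁ hx₁
    -- bound |ψ| on [x₁ - 1, x₁ + 1]
    obtain ⟨M, hM⟩ := (isCompact_Icc (a := x₁ - 1) (b := x₁ + 1)).exists_bound_of_continuousOn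
      hcont.continuousOn
    have hMc : ∀ y ∈ Icc (x₁ - 1) (x₁ + 1), |ψ y + c| ≤ M + 1 := by
      intro y hy
      calc |ψ y + c| ≤ |ψ y| + |c| := abs_add_le _ _
        _ ≤ M + 1 := by
            have := hM y hy
            rw [Real.norm_eq_abs] at this
            rw [habs]; linarith
    have hKnn : 0 ≤ Real.sqrt lam * (M + 1) := by
      have : (0:ℝ) ≤ M + 1 := le_trans (by positivity) (hMc x₁ ⟨by linarith, by linarith⟩)
      positivity
    have hbound : ∀ y ∈ Icc (x₁ - 1) (x₁ + 1),
        |Real.sqrt lam * hh (ψ y)| ≤ (Real.sqrt lam * (M + 1)) * |ψ y - c| := by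
      intro y hy
      have h1 : hh (ψ y) ≤ |ψ y - c| * |ψ y + c| := by
        calc hh (ψ y) ≤ |(ψ y)^2 - 1| := hh_le _
          _ = |(ψ y - c) * (ψ y + c)| := by rw [show (ψ y)^2 - 1 = (ψ y - c) * (ψ y + c) by nlinarith]
          _ = |ψ y - c| * |ψ y + c| := abs_mul _ _
      have h2 : |ψ y + c| ≤ M + 1 := hMc y hy
      rw [abs_mul, abs_of_nonneg (Real.sqrt_nonneg lam), abs_of_nonneg (hh_nonneg _)]
      calc Real.sqrt lam * hh (ψ y) ≤ Real.sqrt lam * (|ψ y - c| * |ψ y + c|) := by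
            apply mul_le_mul_of_nonneg_left h1 (Real.sqrt_nonneg lam)
        _ ≤ Real.sqrt lam * (|ψ y - c| * (M + 1)) := by
            apply mul_le_mul_of_nonneg_left _ (Real.sqrt_nonneg lam)
            exact mul_le_mul_of_nonneg_left h2 (abs_nonneg _)
        _ = (Real.sqrt lam * (M + 1)) * |ψ y - c| := by ring
    -- forward
    have hfwd : ∀ y ∈ Icc x₁ (x₁ + 1), ψ y - c = 0 := by
      apply gr0 (f' := fun y => Real.sqrt lam * hh (ψ y)) (by linarith : x₁ ≤ x₁ + 1)
        (fun y => (hd y).sub_const c)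
      · intro y hy
        exact hbound y ⟨by linarith [hy.1], hy.2⟩
      · have : ψ x₁ = c := hx₁
        simpa [sub_eq_zero] using this
    -- backward: reflected function
    have hbwd : ∀ y ∈ Icc x₁ (x₁ + 1), ψ (2 * x₁ - y) - c = 0 := by
      apply gr0 (f' := fun y => -(Real.sqrt lam * hh (ψ (2 * x₁ - y))))
        (by linarith : x₁ ≤ x₁ + 1)
      · intro y
        have hinner : HasDerivAt (fun y : ℝ => 2 * x₁ - y) (-1) y := by
          simpa using (hasDerivAt_id y).const_sub (2 * x₁)
        have := ((hd (2 * x₁ - y)).comp y hinner).sub_const c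
        refine this.congr_deriv ?_
        ring
      · intro y hy
        rw [abs_neg]
        have : 2 * x₁ - y ∈ Icc (x₁ - 1) (x₁ + 1) :=
          ⟨by linarith [hy.2], by linarith [hy.1]⟩
        exact hbound _ this
      · have h : ψ x₁ = c := hx₁
        have h2 : (2:ℝ) * x₁ - x₁ = x₁ := by ring
        rw [h2, h]; ring
    have hsub : Ioo (x₁ - 1) (x₁ + 1) ⊆ S := by
      intro y hy
      rcases le_or_gt x₁ y with h|h
      · have := hfwd y ⟨h, hy.2.le⟩
        simpa [hS, sub_eq_zero] using this
      · have := hbwd (2 * x₁ - y) ⟨by linarith, by linarith [hy.1]⟩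
        have h2 : (2 : ℝ) * x₁ - (2 * x₁ - y) = y := by ring
        rw [h2] at this
        simpa [hS, sub_eq_zero] using this
    exact mem_of_superset (Ioo_mem_nhds (by linarith) (by linarith)) hsub
  have huniv : S = univ :=
    ((isClopen_iff.1 ⟨hclosed, hopen⟩).resolve_left (Nonempty.ne_empty ⟨x, hxc⟩)) 
  have h0' : (0:ℝ) ∈ S := huniv ▸ mem_univ 0
  have : ψ 0 = c := h0'
  rw [h0] at this
  nlinarith


lemma psi_mem {lam : ℝ} (hlam : 0 < lam) {ψ : ℝ → ℝ}
    (hd : ∀ x, HasDerivAt ψ (Real.sqrt lam * hh (ψ x)) x)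
    (h0 : ψ 0 = 0) (x : ℝ) : ψ x ∈ Ioo (-1:ℝ) 1 := by
  have hdiff : Differentiable ℝ ψ := fun y => (hd y).differentiableAt
  have hcont : Continuous ψ := hdiff.continuous
  constructor
  · by_contra h
    push_neg at h
    have h1 : (-1:ℝ) ∈ uIcc (ψ x) (ψ 0) := by
      rw [h0]
      constructor
      · exact min_le_of_left_le h
      · exact le_max_of_le_right (by norm_num)
    obtain ⟨t, _, ht⟩ := intermediate_value_uIcc (hcont.continuousOn (s := uIcc x 0)) h1
    exact psi_ne hlam hd h0 (c := -1) (by norm_num) t ht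
  · by_contra h
    push_neg at h
    have h1 : (1:ℝ) ∈ uIcc (ψ 0) (ψ x) := by
      rw [h0]
      constructor
      · exact min_le_of_left_le (by norm_num)
      · exact le_max_of_le_right h
    obtain ⟨t, _, ht⟩ := intermediate_value_uIcc (hcont.continuousOn (s := uIcc 0 x)) h1
    exact psi_ne hlam hd h0 (c := 1) (by norm_num) t ht

lemma psi_eq {lam : ℝ} (hlam : 0 < lam) {ψ : ℝ → ℝ}
    (hd : ∀ x, HasDerivAt ψ (Real.sqrt lam * hh (ψ x)) x)
    (h0 : ψ 0 = 0) : ψ = φ0 lam := by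
  have hmem := psi_mem hlam hd h0
  set G : ℝ → ℝ := fun x => HH (ψ x) - Real.sqrt lam * x with hG
  have hGd : ∀ x, HasDerivAt G 0 x := by
    intro x
    have h1 := (HH_deriv (hmem x)).comp x (hd x)
    have h2 : HasDerivAt (fun x : ℝ => Real.sqrt lam * x) (Real.sqrt lam) x := by
      simpa using (hasDerivAt_id x).const_mul (Real.sqrt lam)
    have h3 := h1.sub h2
    refine h3.congr_deriv ?_
    field_simp [(hh_pos (hmem x)).ne']; ring
  have hGdiff : Differentiable ℝ G := fun x => (hGd x).differentiableAt
  have hGconst : ∀ x, G x = G 0 :=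
    fun x => is_const_of_deriv_eq_zero hGdiff (fun y => (hGd y).deriv) x 0
  funext x
  have := hGconst x
  rw [hG] at this
  simp only [h0, HH_zero, mul_zero, sub_zero] at this
  have hHH : HH (ψ x) = Real.sqrt lam * x := by linarith [this]
  exact HH_mono.injOn (hmem x) (φ0_mem lam x) (hHH.trans (HH_φ0 lam x).symm)


theorem exists_unique_kink (lam : ℝ) (hlam : 0 < lam) :
    ∃ φ : ℝ → ℝ,
      (ContDiff ℝ 1 φ ∧ φ 0 = 0 ∧
        (∀ x, deriv φ x = Real.sqrt lam *
          Real.sqrt ((φ x) ^ 2 * Real.log ((φ x) ^ 2) - (φ x) ^ 2 + 1))) ∧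
      StrictMono φ ∧
      (∀ x, φ x ∈ Set.Ioo (-1 : ℝ) 1) ∧
      Tendsto φ atTop (nhds 1) ∧ Tendsto φ atBot (nhds (-1)) ∧
      (∀ ψ : ℝ → ℝ, ContDiff ℝ 1 ψ → ψ 0 = 0 →
        (∀ x, deriv ψ x = Real.sqrt lam *
          Real.sqrt ((ψ x) ^ 2 * Real.log ((ψ x) ^ 2) - (ψ x) ^ 2 + 1)) →
        ψ = φ) := by
  have hhh : ∀ y : ℝ, Real.sqrt (y ^ 2 * Real.log (y ^ 2) - y ^ 2 + 1) = hh y := by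
    intro y; rw [hh, gg]
  refine ⟨φ0 lam, ⟨?_, φ0_zero lam, ?_⟩, φ0_mono lam hlam, φ0_mem lam, φ0_atTop lam hlam,
    φ0_atBot lam hlam, ?_⟩
  · rw [contDiff_one_iff_deriv]
    have hdiff : Differentiable ℝ (φ0 lam) := fun x => (φ0_hasDeriv lam hlam x).differentiableAt
    refine ⟨hdiff, ?_⟩
    have : deriv (φ0 lam) = fun x => Real.sqrt lam * hh (φ0 lam x) :=
      funext fun x => (φ0_hasDeriv lam hlam x).deriv
    rw [this]
    exact continuous_const.mul (hh_cont.comp (φ0_cont lam hlam))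
  · intro x
    rw [hhh, (φ0_hasDeriv lam hlam x).deriv]
  · intro ψ hC1 h0 hder
    have hd : ∀ x, HasDerivAt ψ (Real.sqrt lam * hh (ψ x)) x := by
      intro x
      have := ((hC1.differentiable one_ne_zero) x).hasDerivAt
      rwa [hder x, hhh] at this
    exact psi_eq hlam hd h0
end

section
/- Let λ > 0 and φ₀ the solution of φ₀' = √λ √(φ₀² ln φ₀² − φ₀² + 1), φ₀(0) = 0. Then φ₀ converges to its limits ±1 exponentially fast: there exist constants c₁, C > 0 such that −1 < φ₀(x) ≤ −1 + e^{√λ c₁ x} for all x ≤ 0 and 1 − e^{−√λ c₁ x} ≤ φ₀(x) < 1 for all x ≥ 0. In particular φ₀' ∈ L²(ℝ) and |φ₀| − 1 ∈ L²(ℝ). -/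
open MeasureTheory Set Real

private lemma kink_F_lb {y : ℝ} (h : |y| ≤ 1) :
    (1 - |y|) ^ 2 ≤ y ^ 2 * Real.log (y ^ 2) - y ^ 2 + 1 := by
  rcases eq_or_ne y 0 with rfl | hy
  · simp
  · set t := |y| with ht
    have ht0 : 0 < t := abs_pos.2 hy
    have hsq : y ^ 2 = t ^ 2 := (sq_abs y).symm
    have hlog : Real.log (y ^ 2) = 2 * Real.log t := by
      rw [hsq, Real.log_pow]; push_cast; ring
    have h1 : Real.log (1 / t) ≤ 1 / t - 1 :=
      Real.log_le_sub_one_of_pos (by positivity)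
    rw [Real.log_div one_ne_zero ht0.ne', Real.log_one] at h1
    have h2 : 1 - 1 / t ≤ Real.log t := by linarith
    have h3 : t ^ 2 * (2 * (1 - 1 / t)) ≤ t ^ 2 * (2 * Real.log t) := by
      have : (0:ℝ) ≤ t ^ 2 := sq_nonneg t
      nlinarith
    have h4 : t ^ 2 * (2 * (1 - 1 / t)) = 2 * t ^ 2 - 2 * t := by
      field_simp
    rw [hlog, hsq]
    nlinarith

private lemma kink_F_ub {y : ℝ} (h : |y| ≤ 1) :
    y ^ 2 * Real.log (y ^ 2) - y ^ 2 + 1 ≤ (2 * (1 - |y|)) ^ 2 := by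
  rcases eq_or_ne y 0 with rfl | hy
  · norm_num
  · set t := |y| with ht
    have ht0 : 0 < t := abs_pos.2 hy
    have hsq : y ^ 2 = t ^ 2 := (sq_abs y).symm
    have hlog : Real.log (y ^ 2) = 2 * Real.log t := by
      rw [hsq, Real.log_pow]; push_cast; ring
    have h1 : Real.log t ≤ t - 1 := Real.log_le_sub_one_of_pos ht0
    have h3 : t ^ 2 * (2 * Real.log t) ≤ t ^ 2 * (2 * (t - 1)) := by nlinarith [sq_nonneg t]
    rw [hlog, hsq]
    nlinarith [sq_nonneg (1 - t), ht0.le]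

private lemma kink_sqrt_lb {y : ℝ} (h : |y| ≤ 1) :
    1 - |y| ≤ Real.sqrt (y ^ 2 * Real.log (y ^ 2) - y ^ 2 + 1) := by
  calc 1 - |y| = Real.sqrt ((1 - |y|) ^ 2) :=
        (Real.sqrt_sq (by linarith [abs_nonneg y])).symm
    _ ≤ _ := Real.sqrt_le_sqrt (kink_F_lb h)

private lemma kink_sqrt_ub {y : ℝ} (h : |y| ≤ 1) :
    Real.sqrt (y ^ 2 * Real.log (y ^ 2) - y ^ 2 + 1) ≤ 2 * (1 - |y|) := by
  calc Real.sqrt (y ^ 2 * Real.log (y ^ 2) - y ^ 2 + 1)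
      ≤ Real.sqrt ((2 * (1 - |y|)) ^ 2) := Real.sqrt_le_sqrt (kink_F_ub h)
    _ = 2 * (1 - |y|) := Real.sqrt_sq (by linarith [abs_nonneg y])

private lemma kink_half (lam : ℝ) (hlam : 0 < lam) (φ : ℝ → ℝ)
    (hreg : ContDiff ℝ 1 φ) (h0 : φ 0 = 0)
    (hode : ∀ x, deriv φ x = Real.sqrt lam *
      Real.sqrt ((φ x) ^ 2 * Real.log ((φ x) ^ 2) - (φ x) ^ 2 + 1)) :
    ∀ x ≥ (0:ℝ), 1 - Real.exp (-(Real.sqrt lam * x)) ≤ φ x ∧ φ x < 1 := by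
  have hdiff : Differentiable ℝ φ := hreg.differentiable one_ne_zero
  have hcont : Continuous φ := hreg.continuous
  have hsl : 0 < Real.sqrt lam := Real.sqrt_pos.2 hlam
  have hmono : Monotone φ :=
    monotone_of_deriv_nonneg hdiff (fun x => by rw [hode]; positivity)
  have hnn : ∀ x ≥ (0:ℝ), 0 ≤ φ x := fun x hx => h0 ▸ hmono hx
  -- general derivative computation for (1 - φ x) * exp (K x)
  have hder : ∀ (K x : ℝ), HasDerivAt (fun x => (1 - φ x) * Real.exp (K * x))
      (-(deriv φ x) * Real.exp (K * x) + (1 - φ x) * (K * Real.exp (K * x))) x := by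
    intro K x
    have h1 : HasDerivAt (fun x => 1 - φ x) (-(deriv φ x)) x :=
      ((hdiff x).hasDerivAt).const_sub 1
    have h2 : HasDerivAt (fun x => Real.exp (K * x)) (K * Real.exp (K * x)) x := by
      have := (Real.hasDerivAt_exp (K * x)).comp x ((hasDerivAt_id x).const_mul K)
      simpa [mul_comm, Function.comp_def] using this
    exact h1.mul h2
  have hcontKx : ∀ K : ℝ, Continuous (fun x => (1 - φ x) * Real.exp (K * x)) := by
    intro K; fun_prop
  -- φ < 1 on [0, ∞)
  have hlt1 : ∀ x ≥ (0:ℝ), φ x < 1 := by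
    by_contra hc
    push_neg at hc
    obtain ⟨x₁, hx₁0, hφx₁⟩ := hc
    set S : Set ℝ := Icc 0 x₁ ∩ {x | φ x = 1} with hSdef
    have hSne : S.Nonempty := by
      obtain ⟨c, hc1, hc2⟩ := intermediate_value_Icc hx₁0 hcont.continuousOn
        (by rw [h0]; exact ⟨zero_le_one, hφx₁⟩)
      exact ⟨c, hc1, hc2⟩
    have hScl : IsClosed S := isClosed_Icc.inter (isClosed_eq hcont continuous_const)
    have hSbdd : BddBelow S := ⟨0, fun x hx => hx.1.1⟩
    set x₀ := sInf S with hx₀def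
    have hx₀S : x₀ ∈ S := hScl.csInf_mem hSne hSbdd
    have hx₀0 : 0 ≤ x₀ := hx₀S.1.1
    have hφx₀ : φ x₀ = 1 := hx₀S.2
    have hle1 : ∀ x ∈ Icc (0:ℝ) x₀, φ x ≤ 1 := by
      intro x hx
      by_contra hgt
      push_neg at hgt
      have hxlt : x < x₀ := lt_of_le_of_ne hx.2 (fun h' => by rw [h'] at hgt; linarith)
      obtain ⟨c, hc1, hc2⟩ := intermediate_value_Icc hx.1 hcont.continuousOn
        (by rw [h0]; exact ⟨zero_le_one, hgt.le⟩)
      have hcS : c ∈ S := ⟨⟨hc1.1, le_trans hc1.2 (le_trans hxlt.le hx₀S.1.2)⟩, hc2⟩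
      have := csInf_le hSbdd hcS
      linarith [hc1.2]
    -- barrier function
    have hMono : MonotoneOn (fun x => (1 - φ x) * Real.exp (2 * Real.sqrt lam * x)) (Icc 0 x₀) := by
      apply monotoneOn_of_deriv_nonneg (convex_Icc 0 x₀) (hcontKx _).continuousOn
        (fun x _ => ((hder _ x).differentiableAt).differentiableWithinAt)
      intro x hx
      rw [interior_Icc] at hx
      rw [(hder _ x).deriv]
      have hφ0 : 0 ≤ φ x := hnn x hx.1.le
      have hφ1 : φ x ≤ 1 := hle1 x ⟨hx.1.le, hx.2.le⟩
      have habs : |φ x| = φ x := abs_of_nonneg hφ0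
      have hub := kink_sqrt_ub (y := φ x) (by rw [habs]; exact hφ1)
      rw [habs] at hub
      have hd : deriv φ x ≤ Real.sqrt lam * (2 * (1 - φ x)) := by
        rw [hode]; exact mul_le_mul_of_nonneg_left hub hsl.le
      have hE : 0 < Real.exp (2 * Real.sqrt lam * x) := Real.exp_pos _
      nlinarith [mul_le_mul_of_nonneg_right hd hE.le]
    have h01 : (0:ℝ) ∈ Icc (0:ℝ) x₀ := ⟨le_refl 0, hx₀0⟩
    have hx₀mem : x₀ ∈ Icc (0:ℝ) x₀ := ⟨hx₀0, le_refl x₀⟩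
    have := hMono h01 hx₀mem hx₀0
    simp only [h0, hφx₀] at this
    norm_num at this
  -- Gronwall lower bound
  have hAnti : AntitoneOn (fun x => (1 - φ x) * Real.exp (Real.sqrt lam * x)) (Ici 0) := by
    apply antitoneOn_of_deriv_nonpos (convex_Ici 0) (hcontKx _).continuousOn
      (fun x _ => ((hder _ x).differentiableAt).differentiableWithinAt)
    intro x hx
    rw [interior_Ici] at hx
    rw [(hder _ x).deriv]
    have hφ0 : 0 ≤ φ x := hnn x (le_of_lt hx)
    have hφ1 : φ x < 1 := hlt1 x (le_of_lt hx)
    have habs : |φ x| = φ x := abs_of_nonneg hφ0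
    have hlb := kink_sqrt_lb (y := φ x) (by rw [habs]; exact hφ1.le)
    rw [habs] at hlb
    have hd : Real.sqrt lam * (1 - φ x) ≤ deriv φ x := by
      rw [hode]; exact mul_le_mul_of_nonneg_left hlb hsl.le
    have hE : 0 < Real.exp (Real.sqrt lam * x) := Real.exp_pos _
    nlinarith [mul_le_mul_of_nonneg_right hd hE.le]
  intro x hx
  refine ⟨?_, hlt1 x hx⟩
  have h1 := hAnti (self_mem_Ici (a := (0:ℝ))) hx hx
  simp only [h0, mul_zero, Real.exp_zero, sub_zero, one_mul] at h1
  have hE : 0 < Real.exp (Real.sqrt lam * x) := Real.exp_pos _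
  have h2 : 1 - φ x ≤ Real.exp (-(Real.sqrt lam * x)) := by
    rw [Real.exp_neg, inv_eq_one_div, le_div_iff₀ hE]
    linarith
  linarith

theorem kink_exponential_convergence (lam : ℝ) (hlam : 0 < lam) (φ : ℝ → ℝ)
    (hreg : ContDiff ℝ 1 φ) (h0 : φ 0 = 0)
    (hode : ∀ x, deriv φ x = Real.sqrt lam *
      Real.sqrt ((φ x) ^ 2 * Real.log ((φ x) ^ 2) - (φ x) ^ 2 + 1)) :
    ∃ c₁ > (0:ℝ),
      (∀ x ≤ (0:ℝ), -1 < φ x ∧ φ x ≤ -1 + Real.exp (Real.sqrt lam * c₁ * x)) ∧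
      (∀ x ≥ (0:ℝ), 1 - Real.exp (-(Real.sqrt lam * c₁ * x)) ≤ φ x ∧ φ x < 1) ∧
      MemLp (deriv φ) 2 (volume : Measure ℝ) ∧
      MemLp (fun x => |φ x| - 1) 2 (volume : Measure ℝ) := by
  have hdiff : Differentiable ℝ φ := hreg.differentiable one_ne_zero
  have hsl : 0 < Real.sqrt lam := Real.sqrt_pos.2 hlam
  have hpos := kink_half lam hlam φ hreg h0 hode
  -- the reflected solution
  set ψ : ℝ → ℝ := fun x => -φ (-x) with hψdef
  have hψd : ∀ x, HasDerivAt ψ (deriv φ (-x)) x := by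
    intro x
    have h1 : HasDerivAt (fun x : ℝ => φ (-x)) (deriv φ (-x) * (-1)) x :=
      ((hdiff (-x)).hasDerivAt).comp x (hasDerivAt_neg x)
    simpa [hψdef, Pi.neg_def] using h1.neg
  have hψreg : ContDiff ℝ 1 ψ := (hreg.comp (contDiff_id.neg)).neg
  have hψ0 : ψ 0 = 0 := by simp [hψdef, h0]
  have hψode : ∀ x, deriv ψ x = Real.sqrt lam *
      Real.sqrt ((ψ x) ^ 2 * Real.log ((ψ x) ^ 2) - (ψ x) ^ 2 + 1) := by
    intro x
    have h2 : ψ x ^ 2 = φ (-x) ^ 2 := by simp [hψdef]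
    rw [(hψd x).deriv, hode (-x), h2]
  have hneg' := kink_half lam hlam ψ hψreg hψ0 hψode
  have hneg : ∀ x ≤ (0:ℝ), -1 < φ x ∧ φ x ≤ -1 + Real.exp (Real.sqrt lam * x) := by
    intro x hx
    have := hneg' (-x) (by linarith)
    simp only [hψdef, neg_neg] at this
    obtain ⟨ha, hb⟩ := this
    constructor
    · linarith
    · have : Real.exp (-(Real.sqrt lam * -x)) = Real.exp (Real.sqrt lam * x) := by ring_nf
      linarith [this ▸ ha]
  -- pointwise exponential bounds
  have hkey : ∀ x : ℝ, 0 ≤ 1 - |φ x| ∧ 1 - |φ x| ≤ Real.exp (-(Real.sqrt lam * |x|)) := by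
    intro x
    rcases le_or_gt 0 x with hx | hx
    · obtain ⟨ha, hb⟩ := hpos x hx
      have h1 : 0 ≤ φ x := by
        have := (kink_half lam hlam φ hreg h0 hode)
        have hmono : Monotone φ :=
          monotone_of_deriv_nonneg hdiff (fun x => by rw [hode]; positivity)
        exact h0 ▸ hmono hx
      rw [abs_of_nonneg h1, abs_of_nonneg hx]
      exact ⟨by linarith, by linarith⟩
    · obtain ⟨ha, hb⟩ := hneg x hx.le
      have h1 : φ x ≤ 0 := by
        have hmono : Monotone φ :=
          monotone_of_deriv_nonneg hdiff (fun x => by rw [hode]; positivity)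
        exact h0 ▸ hmono hx.le
      rw [abs_of_nonpos h1, abs_of_nonpos hx.le]
      constructor
      · linarith
      · have : Real.exp (-(Real.sqrt lam * -x)) = Real.exp (Real.sqrt lam * x) := by ring_nf
        rw [this]; linarith
  -- the comparison function is in L²
  have hg_cont : Continuous (fun x : ℝ => Real.exp (-(Real.sqrt lam * |x|))) := by fun_prop
  have hg_mem : MemLp (fun x : ℝ => Real.exp (-(Real.sqrt lam * |x|))) 2 volume := by
    rw [memLp_two_iff_integrable_sq hg_cont.aestronglyMeasurable]
    have heq : ∀ x : ℝ, (Real.exp (-(Real.sqrt lam * |x|))) ^ 2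
        = Real.exp (-(2 * Real.sqrt lam) * |x|) := by
      intro x; rw [sq, ← Real.exp_add]; ring_nf
    simp only [heq]
    have hIoi : IntegrableOn (fun x : ℝ => Real.exp (-(2 * Real.sqrt lam) * |x|)) (Ioi 0) := by
      apply Integrable.mono' (exp_neg_integrableOn_Ioi 0 (by positivity : (0:ℝ) < 2 * Real.sqrt lam))
      · exact (by fun_prop : Continuous fun x : ℝ => Real.exp (-(2 * Real.sqrt lam) * |x|)).aestronglyMeasurable
      · filter_upwards [ae_restrict_mem measurableSet_Ioi] with x hx
        rw [Real.norm_eq_abs, abs_of_nonneg (Real.exp_pos _).le, abs_of_nonneg (le_of_lt hx)]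
    have hIci : IntegrableOn (fun x : ℝ => Real.exp (-(2 * Real.sqrt lam) * |x|)) (Ici 0) := by
      rwa [integrableOn_Ici_iff_integrableOn_Ioi]
    have hIic : IntegrableOn (fun x : ℝ => Real.exp (-(2 * Real.sqrt lam) * |x|)) (Iic 0) := by
      rw [← (Measure.measurePreserving_neg (volume : Measure ℝ)).integrableOn_comp_preimage
          (Homeomorph.neg ℝ).measurableEmbedding]
      simp only [Function.comp_def, abs_neg, neg_preimage, neg_Iic, neg_zero]
      exact hIci
    rw [← integrableOn_univ, ← Iic_union_Ioi (a := (0:ℝ)), integrableOn_union]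
    exact ⟨hIic, hIoi⟩
  refine ⟨1, one_pos, ?_, ?_, ?_, ?_⟩
  · intro x hx
    have := hneg x hx
    simpa [mul_one] using this
  · intro x hx
    have := hpos x hx
    simpa [mul_one] using this
  · -- deriv φ in L²
    apply MemLp.of_le (hg_mem.const_mul (2 * Real.sqrt lam))
      ((hreg.continuous_deriv le_rfl).aestronglyMeasurable)
    filter_upwards with x
    obtain ⟨h1, h2⟩ := hkey x
    have habs : |φ x| ≤ 1 := by linarith
    have hub := kink_sqrt_ub (y := φ x) habs
    rw [Real.norm_eq_abs, Real.norm_eq_abs, hode,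
      abs_of_nonneg (by positivity), abs_of_nonneg (by positivity)]
    calc Real.sqrt lam * Real.sqrt (φ x ^ 2 * Real.log (φ x ^ 2) - φ x ^ 2 + 1)
        ≤ Real.sqrt lam * (2 * (1 - |φ x|)) := mul_le_mul_of_nonneg_left hub hsl.le
      _ ≤ Real.sqrt lam * (2 * Real.exp (-(Real.sqrt lam * |x|))) := by nlinarith
      _ = 2 * Real.sqrt lam * Real.exp (-(Real.sqrt lam * |x|)) := by ring
  · -- |φ| - 1 in L²
    apply MemLp.of_le hg_mem ((hreg.continuous.abs.sub continuous_const).aestronglyMeasurable)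
    filter_upwards with x
    obtain ⟨h1, h2⟩ := hkey x
    simp only [Pi.sub_apply]
    rw [Real.norm_eq_abs, Real.norm_eq_abs, abs_of_nonpos (by linarith : |φ x| - 1 ≤ 0),
      abs_of_nonneg (Real.exp_pos _).le]
    linarith
end

section
/- Let λ > 0 and c ∈ ℝ with 0 < c² < 2λ. Define g_c(y) = −(c²/4)(1−y²)²/y² + λ(y² ln(y²) − y² + 1) for y > 0. Then g_c has exactly two zeros on (0, ∞): some y₀ ∈ (0, 1) and y = 1; moreover g_c is negative on (0, y₀) and positive on (y₀, ∞) \ {1}. -/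
open Real Set

private noncomputable def Hf (lam c t : ℝ) : ℝ :=
  -(c ^ 2 / 4) * (t⁻¹ - 2 + t) + lam * (t * Real.log t - t + 1)

private noncomputable def Pf (lam c t : ℝ) : ℝ :=
  c ^ 2 / 4 * (t⁻¹ ^ 2 - 1) + lam * Real.log t

private noncomputable def Qf (lam c t : ℝ) : ℝ :=
  -(c ^ 2 / 2) * t⁻¹ ^ 3 + lam * t⁻¹

private lemma hasDerivAt_Hf (lam c t : ℝ) (ht : t ≠ 0) :
    HasDerivAt (Hf lam c) (Pf lam c t) t := by
  have h1 : HasDerivAt (fun t : ℝ => t⁻¹ - 2 + t) (-(t ^ 2)⁻¹ + 1) t :=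
    ((hasDerivAt_inv ht).sub_const 2).add (hasDerivAt_id t)
  have h2 : HasDerivAt (fun t : ℝ => t * Real.log t - t + 1)
      (1 * Real.log t + t * t⁻¹ - 1) t :=
    (((hasDerivAt_id t).mul (Real.hasDerivAt_log ht)).sub (hasDerivAt_id t)).add_const 1
  have h := (h1.const_mul (-(c ^ 2 / 4))).add (h2.const_mul lam)
  refine h.congr_deriv ?_
  unfold Pf
  field_simp
  ring

private lemma hasDerivAt_Pf (lam c t : ℝ) (ht : t ≠ 0) :
    HasDerivAt (Pf lam c) (Qf lam c t) t := by
  have h1 : HasDerivAt (fun t : ℝ => t⁻¹ ^ 2 - 1)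
      ((2 : ℕ) * t⁻¹ ^ 1 * (-(t ^ 2)⁻¹)) t := ((hasDerivAt_inv ht).pow 2).sub_const 1
  have h := (h1.const_mul (c ^ 2 / 4)).add ((Real.hasDerivAt_log ht).const_mul lam)
  refine h.congr_deriv ?_
  unfold Qf
  field_simp
  ring

set_option maxHeartbeats 1600000 in
theorem g_c_sign (lam c : ℝ) (hlam : 0 < lam) (hc : 0 < c ^ 2) (hc2 : c ^ 2 < 2 * lam) :
    ∃ y₀ ∈ Set.Ioo (0:ℝ) 1,
      (∀ y > (0:ℝ),
        (-(c ^ 2 / 4) * (1 - y ^ 2) ^ 2 / y ^ 2 +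
            lam * (y ^ 2 * Real.log (y ^ 2) - y ^ 2 + 1) = 0 ↔
          y = y₀ ∨ y = 1)) ∧
      (∀ y ∈ Set.Ioo (0:ℝ) y₀,
        -(c ^ 2 / 4) * (1 - y ^ 2) ^ 2 / y ^ 2 +
          lam * (y ^ 2 * Real.log (y ^ 2) - y ^ 2 + 1) < 0) ∧
      (∀ y > y₀, y ≠ 1 →
        0 < -(c ^ 2 / 4) * (1 - y ^ 2) ^ 2 / y ^ 2 +
          lam * (y ^ 2 * Real.log (y ^ 2) - y ^ 2 + 1)) := by
  -- the critical point of P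
  set a := Real.sqrt (c ^ 2 / (2 * lam)) with ha_def
  have ha2 : a ^ 2 = c ^ 2 / (2 * lam) := Real.sq_sqrt (by positivity)
  have ha0 : 0 < a := Real.sqrt_pos.mpr (by positivity)
  have ha1 : a < 1 := by
    have hlt : a ^ 2 < 1 := by
      rw [ha2, div_lt_one (by positivity)]; linarith
    nlinarith [ha0]
  -- continuity helpers
  have contH : ∀ s : Set ℝ, (∀ t ∈ s, (0:ℝ) < t) → ContinuousOn (Hf lam c) s :=
    fun s hs t ht => ((hasDerivAt_Hf lam c t (ne_of_gt (hs t ht))).continuousAt).continuousWithinAt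
  have contP : ∀ s : Set ℝ, (∀ t ∈ s, (0:ℝ) < t) → ContinuousOn (Pf lam c) s :=
    fun s hs t ht => ((hasDerivAt_Pf lam c t (ne_of_gt (hs t ht))).continuousAt).continuousWithinAt
  have dH : ∀ t : ℝ, t ≠ 0 → deriv (Hf lam c) t = Pf lam c t :=
    fun t ht => (hasDerivAt_Hf lam c t ht).deriv
  have dP : ∀ t : ℝ, t ≠ 0 → deriv (Pf lam c) t = Qf lam c t :=
    fun t ht => (hasDerivAt_Pf lam c t ht).deriv
  -- sign of Qf
  have hQneg : ∀ t, 0 < t → t < a → Qf lam c t < 0 := by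
    intro t h0 hta
    have ht2 : t ^ 2 < c ^ 2 / (2 * lam) := by nlinarith
    have hfact : Qf lam c t = (lam * t ^ 2 - c ^ 2 / 2) * t⁻¹ ^ 3 := by
      unfold Qf; field_simp; ring
    rw [hfact]
    have hkey : lam * (c ^ 2 / (2 * lam)) = c ^ 2 / 2 := by
      field_simp
    have h1 : lam * t ^ 2 - c ^ 2 / 2 < 0 := by
      nlinarith [mul_lt_mul_of_pos_left ht2 hlam]
    have h2 : (0:ℝ) < t⁻¹ ^ 3 := by positivity
    exact mul_neg_of_neg_of_pos h1 h2
  have hQpos : ∀ t, a < t → 0 < Qf lam c t := by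
    intro t hta
    have h0 : 0 < t := lt_trans ha0 hta
    have ht2 : c ^ 2 / (2 * lam) < t ^ 2 := by nlinarith
    have hfact : Qf lam c t = (lam * t ^ 2 - c ^ 2 / 2) * t⁻¹ ^ 3 := by
      unfold Qf; field_simp; ring
    rw [hfact]
    have hkey : lam * (c ^ 2 / (2 * lam)) = c ^ 2 / 2 := by
      field_simp
    have h1 : 0 < lam * t ^ 2 - c ^ 2 / 2 := by
      nlinarith [mul_lt_mul_of_pos_left ht2 hlam]
    have h2 : (0:ℝ) < t⁻¹ ^ 3 := by positivity
    exact mul_pos h1 h2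
  -- monotonicity of P
  have Panti : StrictAntiOn (Pf lam c) (Ioc 0 a) := by
    apply strictAntiOn_of_deriv_neg (convex_Ioc 0 a) (contP _ (fun t ht => ht.1))
    intro t ht
    rw [interior_Ioc] at ht
    rw [dP t (ne_of_gt ht.1)]
    exact hQneg t ht.1 ht.2
  have Pmono : StrictMonoOn (Pf lam c) (Ici a) := by
    apply strictMonoOn_of_deriv_pos (convex_Ici a) (contP _ (fun t ht => lt_of_lt_of_le ha0 ht))
    intro t ht
    rw [interior_Ici] at ht
    rw [dP t (ne_of_gt (lt_trans ha0 ht))]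
    exact hQpos t ht
  have P1 : Pf lam c 1 = 0 := by simp [Pf]
  have Pa : Pf lam c a < 0 := by
    have := Pmono (self_mem_Ici) (mem_Ici.mpr ha1.le) ha1
    rwa [P1] at this
  -- P is positive at a small point ε
  set ε := min (c ^ 2 / (8 * lam)) (a / 2) with hε_def
  have hε0 : 0 < ε := lt_min (by positivity) (by positivity)
  have hεa : ε < a := lt_of_le_of_lt (min_le_right _ _) (by linarith)
  have hPε : 0 < Pf lam c ε := by
    have hle : ε ≤ c ^ 2 / (8 * lam) := min_le_left _ _
    have h8 : 8 * lam ≤ c ^ 2 * ε⁻¹ := by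
      rw [le_div_iff₀ (by positivity : (0:ℝ) < 8 * lam)] at hle
      have := mul_le_mul_of_nonneg_right hle (by positivity : (0:ℝ) ≤ ε⁻¹)
      have hεinv : ε * ε⁻¹ = 1 := mul_inv_cancel₀ (ne_of_gt hε0)
      calc 8 * lam = ε * (8 * lam) * ε⁻¹ := by rw [mul_comm ε, mul_assoc, hεinv]; ring
        _ ≤ c ^ 2 * ε⁻¹ := by nlinarith [mul_le_mul_of_nonneg_right hle (by positivity : (0:ℝ) ≤ 8 * lam * ε⁻¹)]
    have hlog : 1 - ε⁻¹ ≤ Real.log ε := by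
      have := Real.log_le_sub_one_of_pos (show (0:ℝ) < ε⁻¹ by positivity)
      rw [Real.log_inv] at this
      linarith
    have hu : 0 < ε⁻¹ := by positivity
    show 0 < c ^ 2 / 4 * (ε⁻¹ ^ 2 - 1) + lam * Real.log ε
    nlinarith [mul_le_mul_of_nonneg_right h8 hu.le, mul_pos hlam hu,
      mul_le_mul_of_nonneg_left hlog hlam.le]
  -- existence of t₁, zero of P in (ε, a)
  obtain ⟨t₁, ht₁mem, ht₁⟩ :=
    intermediate_value_Ioo' hεa.le (contP _ (fun t ht => lt_of_lt_of_le hε0 ht.1)) ⟨Pa, hPε⟩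
  have ht₁0 : 0 < t₁ := lt_trans hε0 ht₁mem.1
  have ht₁a : t₁ < a := ht₁mem.2
  have ht₁1 : t₁ < 1 := lt_trans ht₁a ha1
  -- sign of P
  have Ppos : ∀ t, 0 < t → t < t₁ → 0 < Pf lam c t := by
    intro t h0 hlt
    have := Panti ⟨h0, (lt_trans hlt ht₁a).le⟩ ⟨ht₁0, ht₁a.le⟩ hlt
    rwa [ht₁] at this
  have Pneg : ∀ t, t₁ < t → t < 1 → Pf lam c t < 0 := by
    intro t hgt hlt
    rcases le_or_gt t a with h | h
    · have := Panti ⟨ht₁0, ht₁a.le⟩ ⟨lt_trans ht₁0 hgt, h⟩ hgt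
      rwa [ht₁] at this
    · have := Pmono (mem_Ici.mpr h.le) (mem_Ici.mpr ha1.le) hlt
      rwa [P1] at this
  have Ppos1 : ∀ t, 1 < t → 0 < Pf lam c t := by
    intro t hgt
    have := Pmono (mem_Ici.mpr ha1.le) (mem_Ici.mpr (le_of_lt (lt_trans ha1 hgt))) hgt
    rwa [P1] at this
  -- monotonicity of H
  have Hmono1 : StrictMonoOn (Hf lam c) (Ioc 0 t₁) := by
    apply strictMonoOn_of_deriv_pos (convex_Ioc 0 t₁) (contH _ (fun t ht => ht.1))
    intro t ht
    rw [interior_Ioc] at ht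
    rw [dH t (ne_of_gt ht.1)]
    exact Ppos t ht.1 ht.2
  have Hanti : StrictAntiOn (Hf lam c) (Icc t₁ 1) := by
    apply strictAntiOn_of_deriv_neg (convex_Icc t₁ 1) (contH _ (fun t ht => lt_of_lt_of_le ht₁0 ht.1))
    intro t ht
    rw [interior_Icc] at ht
    rw [dH t (ne_of_gt (lt_trans ht₁0 ht.1))]
    exact Pneg t ht.1 ht.2
  have Hmono2 : StrictMonoOn (Hf lam c) (Ici 1) := by
    apply strictMonoOn_of_deriv_pos (convex_Ici 1) (contH _ (fun t ht => lt_of_lt_of_le one_pos ht))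
    intro t ht
    rw [interior_Ici] at ht
    rw [dH t (ne_of_gt (lt_trans one_pos ht))]
    exact Ppos1 t ht
  have H1 : Hf lam c 1 = 0 := by norm_num [Hf]
  have Ht₁pos : 0 < Hf lam c t₁ := by
    have := Hanti ⟨le_refl t₁, ht₁1.le⟩ ⟨ht₁1.le, le_refl 1⟩ ht₁1
    rwa [H1] at this
  -- H is negative at a small point δ
  set δ := min (t₁ / 2) (c ^ 2 / (8 * (c ^ 2 / 2 + lam))) with hδ_def
  have hδ0 : 0 < δ := lt_min (by positivity) (by positivity)
  have hδt₁ : δ < t₁ := lt_of_le_of_lt (min_le_left _ _) (by linarith)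
  have hδ1 : δ < 1 := lt_trans hδt₁ ht₁1
  have hHδ : Hf lam c δ < 0 := by
    have hle : δ ≤ c ^ 2 / (8 * (c ^ 2 / 2 + lam)) := min_le_right _ _
    have h8 : 8 * (c ^ 2 / 2 + lam) ≤ c ^ 2 * δ⁻¹ := by
      rw [le_div_iff₀ (by positivity : (0:ℝ) < 8 * (c ^ 2 / 2 + lam))] at hle
      have hδinv : δ * δ⁻¹ = 1 := mul_inv_cancel₀ (ne_of_gt hδ0)
      calc 8 * (c ^ 2 / 2 + lam) = δ * (8 * (c ^ 2 / 2 + lam)) * δ⁻¹ := by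
            rw [mul_comm δ, mul_assoc, hδinv]; ring
        _ ≤ c ^ 2 * δ⁻¹ := by
            nlinarith [mul_le_mul_of_nonneg_right hle (by positivity : (0:ℝ) ≤ δ⁻¹)]
    have hlog : Real.log δ ≤ 0 := Real.log_nonpos hδ0.le hδ1.le
    have hprod : lam * (δ * Real.log δ) ≤ 0 :=
      mul_nonpos_of_nonneg_of_nonpos hlam.le (mul_nonpos_of_nonneg_of_nonpos hδ0.le hlog)
    have b3 : -(c ^ 2 / 4) * δ⁻¹ ≤ -(2 * (c ^ 2 / 2 + lam)) := by linarith
    have b1 : lam * (δ * Real.log δ - δ + 1) ≤ lam := by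
      nlinarith [mul_pos hlam hδ0]
    have b2 : -(c ^ 2 / 4) * (δ⁻¹ - 2 + δ) ≤ -(c ^ 2 / 4) * δ⁻¹ + c ^ 2 / 2 := by
      nlinarith [mul_pos hc hδ0]
    show -(c ^ 2 / 4) * (δ⁻¹ - 2 + δ) + lam * (δ * Real.log δ - δ + 1) < 0
    linarith
  -- existence of t₀, zero of H in (δ, t₁)
  obtain ⟨t₀, ht₀mem, ht₀⟩ :=
    intermediate_value_Ioo hδt₁.le (contH _ (fun t ht => lt_of_lt_of_le hδ0 ht.1)) ⟨hHδ, Ht₁pos⟩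
  have ht₀0 : 0 < t₀ := lt_trans hδ0 ht₀mem.1
  have ht₀t₁ : t₀ < t₁ := ht₀mem.2
  have ht₀1 : t₀ < 1 := lt_trans ht₀t₁ ht₁1
  -- sign of H
  have Hneg : ∀ t, 0 < t → t < t₀ → Hf lam c t < 0 := by
    intro t h0 hlt
    have := Hmono1 ⟨h0, (lt_trans hlt ht₀t₁).le⟩ ⟨ht₀0, ht₀t₁.le⟩ hlt
    rwa [ht₀] at this
  have Hpos : ∀ t, t₀ < t → t ≠ 1 → 0 < Hf lam c t := by
    intro t hgt hne
    rcases le_or_gt t t₁ with h | h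
    · have := Hmono1 ⟨ht₀0, ht₀t₁.le⟩ ⟨lt_trans ht₀0 hgt, h⟩ hgt
      rwa [ht₀] at this
    · rcases lt_trichotomy t 1 with h1 | h1 | h1
      · have := Hanti ⟨h.le, h1.le⟩ ⟨ht₁1.le, le_refl 1⟩ h1
        rwa [H1] at this
      · exact absurd h1 hne
      · have := Hmono2 (self_mem_Ici) (mem_Ici.mpr h1.le) h1
        rwa [H1] at this
  -- pass to y
  set y₀ := Real.sqrt t₀ with hy₀_def
  have hy₀sq : y₀ ^ 2 = t₀ := Real.sq_sqrt ht₀0.le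
  have hy₀0 : 0 < y₀ := Real.sqrt_pos.mpr ht₀0
  have hy₀1 : y₀ < 1 := by nlinarith [hy₀sq, hy₀0]
  have hGH : ∀ y : ℝ, 0 < y →
      -(c ^ 2 / 4) * (1 - y ^ 2) ^ 2 / y ^ 2 +
        lam * (y ^ 2 * Real.log (y ^ 2) - y ^ 2 + 1) = Hf lam c (y ^ 2) := by
    intro y hy
    have hy' : y ≠ 0 := ne_of_gt hy
    unfold Hf
    have h : (1 - y ^ 2) ^ 2 / y ^ 2 = (y ^ 2)⁻¹ - 2 + y ^ 2 := by
      field_simp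
      ring
    rw [div_eq_mul_inv, mul_assoc, ← div_eq_mul_inv ((1 - y ^ 2) ^ 2), h]
  have hsq_eq : ∀ y z : ℝ, 0 < y → 0 < z → y ^ 2 = z ^ 2 → y = z := by
    intro y z hy hz h
    nlinarith [sq_nonneg (y - z), sq_nonneg (y + z)]
  refine ⟨y₀, ⟨hy₀0, hy₀1⟩, ?_, ?_, ?_⟩
  · intro y hy
    rw [hGH y hy]
    constructor
    · intro h0
      by_contra hcon
      push_neg at hcon
      obtain ⟨hne₀, hne1⟩ := hcon
      rcases lt_trichotomy (y ^ 2) t₀ with h | h | h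
      · exact absurd h0 (ne_of_lt (Hneg _ (by positivity) h))
      · exact hne₀ (hsq_eq y y₀ hy hy₀0 (by rw [hy₀sq]; exact h))
      · have hy2ne1 : y ^ 2 ≠ 1 := by
          intro h1
          exact hne1 (hsq_eq y 1 hy one_pos (by rw [h1]; norm_num))
        exact absurd h0 (ne_of_gt (Hpos _ h hy2ne1))
    · rintro (rfl | rfl)
      · rw [hy₀sq]; exact ht₀
      · rw [one_pow]; exact H1
  · intro y hy
    obtain ⟨hy0, hyy₀⟩ := hy
    rw [hGH y hy0]
    apply Hneg _ (by positivity)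
    rw [← hy₀sq]
    exact pow_lt_pow_left₀ hyy₀ hy0.le (by norm_num)
  · intro y hy hne1
    have hy0 : 0 < y := lt_trans hy₀0 hy
    rw [hGH y hy0]
    apply Hpos
    · rw [← hy₀sq]
      exact pow_lt_pow_left₀ hy hy₀0.le (by norm_num)
    · intro h1
      exact hne1 (hsq_eq y 1 hy0 one_pos (by rw [h1]; norm_num))
end

section
/- Let ρ : ℝ → (0, ∞) be C², bounded above and bounded away from 0, with ρ(x) → 1 as x → ±∞. Let c ∈ ℝ and suppose θ : ℝ → ℝ is C² and satisfies ρθ'' + 2ρ'θ' = cρ' on ℝ. If ρ' + iρθ' ∈ L²(ℝ; ℂ), then θ'(x) = (c/2)(1 − 1/ρ(x)²) for all x ∈ ℝ. -/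
open MeasureTheory Filter

lemma limit_zero_of_memL2 {f : ℝ → ℝ} (hf : MemLp f 2 (volume : Measure ℝ))
    {L : ℝ} (hlim : Tendsto f atTop (nhds L)) : L = 0 := by
  by_contra hL
  have hInt : Integrable (fun x => f x ^ 2) volume :=
    (memLp_two_iff_integrable_sq hf.aestronglyMeasurable).1 hf
  have hlim2 : Tendsto (fun x => f x ^ 2) atTop (nhds (L ^ 2)) := hlim.pow 2
  have hε : (0:ℝ) < L ^ 2 / 2 := by positivity
  have hev : ∀ᶠ x in atTop, L ^ 2 / 2 ≤ f x ^ 2 := by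
    filter_upwards [hlim2.eventually (eventually_ge_nhds (by linarith : L ^ 2 / 2 < L ^ 2))] with x hx
    exact hx
  obtain ⟨A, hA⟩ := hev.exists_forall_of_atTop
  have hsub : Set.Ici A ⊆ {x | L ^ 2 / 2 ≤ f x ^ 2} := fun x hx => hA x hx
  have hfin := hInt.measure_ge_lt_top hε
  have : (volume : Measure ℝ) (Set.Ici A) < ⊤ :=
    lt_of_le_of_lt (measure_mono hsub) hfin
  simp [Real.volume_Ici] at this

theorem phase_derivative_formula (c : ℝ) (ρ θ : ℝ → ℝ)
    (hρreg : ContDiff ℝ 2 ρ) (hθreg : ContDiff ℝ 2 θ)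
    (hρpos : ∃ m > (0:ℝ), ∀ x, m ≤ ρ x)
    (hρbdd : ∃ M : ℝ, ∀ x, ρ x ≤ M)
    (hlim_top : Tendsto ρ atTop (nhds 1)) (hlim_bot : Tendsto ρ atBot (nhds 1))
    (hode : ∀ x, ρ x * deriv (deriv θ) x + 2 * deriv ρ x * deriv θ x = c * deriv ρ x)
    (hL2 : MemLp (fun x => ((deriv ρ x : ℝ) : ℂ) + Complex.I * ((ρ x * deriv θ x : ℝ) : ℂ)) 2
      (volume : Measure ℝ)) :
    ∀ x, deriv θ x = c / 2 * (1 - 1 / (ρ x) ^ 2) := by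
  obtain ⟨m, hm, hmρ⟩ := hρpos
  have hρx : ∀ x, 0 < ρ x := fun x => lt_of_lt_of_le hm (hmρ x)
  have hρdiff : Differentiable ℝ ρ := hρreg.differentiable (by norm_num)
  have hθ'diff : Differentiable ℝ (deriv θ) := by
    have := (contDiff_succ_iff_deriv (n := 1)).1 hθreg
    exact this.2.2.differentiable (by norm_num)
  have hθ'cont : Continuous (deriv θ) := hθ'diff.continuous
  -- g := ρ² (θ' - c/2) has zero derivative
  set g : ℝ → ℝ := fun x => ρ x ^ 2 * (deriv θ x - c / 2) with hg
  have hgderiv : ∀ x, HasDerivAt g 0 x := by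
    intro x
    have h1 : HasDerivAt ρ (deriv ρ x) x := (hρdiff x).hasDerivAt
    have h2 : HasDerivAt (deriv θ) (deriv (deriv θ) x) x := (hθ'diff x).hasDerivAt
    have h3 : HasDerivAt (fun y => ρ y ^ 2) (2 * ρ x * deriv ρ x) x := by
      simpa using (h1.fun_pow 2)
    have h4 : HasDerivAt (fun y => deriv θ y - c/2) (deriv (deriv θ) x) x := h2.sub_const _
    have h5 := h3.mul h4
    refine h5.congr_deriv ?_
    linear_combination (ρ x) * hode x
  have hgdiff : Differentiable ℝ g := fun x => (hgderiv x).differentiableAt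
  have hgconst : ∀ x, g x = g 0 :=
    fun x => is_const_of_deriv_eq_zero hgdiff (fun x => (hgderiv x).deriv) x 0
  set C := g 0 with hC
  have hθ' : ∀ x, deriv θ x = c / 2 + C / ρ x ^ 2 := by
    intro x
    have h : ρ x ^ 2 * (deriv θ x - c / 2) = C := hgconst x
    have hne : ρ x ^ 2 ≠ 0 := (pow_pos (hρx x) 2).ne'
    have h2 : deriv θ x - c / 2 = C / ρ x ^ 2 := by
      rw [eq_div_iff hne]; linear_combination h
    linarith [h2]
  -- f := ρ θ' is in L²
  set f : ℝ → ℝ := fun x => ρ x * deriv θ x with hf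
  have hfmem : MemLp f 2 (volume : Measure ℝ) := by
    refine hL2.mono ((hρdiff.continuous.mul hθ'cont).aestronglyMeasurable) ?_
    refine Filter.Eventually.of_forall fun x => ?_
    have : f x = ((((deriv ρ x : ℝ) : ℂ) + Complex.I * ((ρ x * deriv θ x : ℝ) : ℂ))).im := by
      simp [hf]
    rw [Real.norm_eq_abs, this]
    exact Complex.abs_im_le_norm _
  -- f tends to c/2 + C at +∞
  have hρinv : Tendsto (fun x => (ρ x)⁻¹) atTop (nhds 1) := by
    simpa using hlim_top.inv₀ (by norm_num)
  have hflim : Tendsto f atTop (nhds (c / 2 + C)) := by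
    have : ∀ x, f x = c / 2 * ρ x + C * (ρ x)⁻¹ := by
      intro x
      have hne : ρ x ≠ 0 := (hρx x).ne'
      rw [hf]; simp only [hθ' x]; field_simp
    rw [show (c/2 + C) = c/2 * 1 + C * 1 by ring, funext this]
    exact ((hlim_top.const_mul (c/2)).add (hρinv.const_mul C))
  have hCval : c / 2 + C = 0 := limit_zero_of_memL2 hfmem hflim
  intro x
  have hne : ρ x ^ 2 ≠ 0 := (pow_pos (hρx x) 2).ne'
  rw [hθ' x]
  have : C = -(c/2) := by linarith
  rw [this]
  field_simp
  ring
end
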